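/- arXiv:2308.15702 — 3 statements merged into one kernel-verified Lean document; each statement's English description precedes it below -/
import Mathlib

section
/- Let K = K¹ ⊔_σ K² be a wedge-decomposable simplicial complex on [m] with no ghost vertices, let ρ = V(K¹), τ = V(K²), and L = ⟨ρ⟩ ⊔_σ ⟨τ⟩. For each n ≥ 1, the inclusion-induced maps give a short exact sequence of cochain complexes in cohomological degrees l ≥ 1: 0 → CH_n^*(Z_{K¹}) ⊕ CH_n^*(Z_{K²}) → CH_n^*(Z_K) → CH_n^*(Z_L) → 0; that is, for every l ≥ 1 the sequence 0 → CH_n^l(Z_{K¹}) ⊕ CH_n^l(Z_{K²}) → CH_n^l(Z_K) → CH_n^l(Z_L) → 0 is exact and both maps commute with the differentials d. -/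
set_option maxHeartbeats 1000000
set_option synthInstance.maxHeartbeats 1000000

open scoped DirectSum

namespace DH

/-- An abstract simplicial complex on the finite (totally ordered) vertex set `S ⊆ ℕ`:
a collection of subsets of `S` containing `∅` and closed under taking subsets. -/
structure SComplex (S : Finset ℕ) : Type where
  faces : Set (Finset ℕ)
  empty_mem : ∅ ∈ faces
  faces_subset : ∀ ⦃σ : Finset ℕ⦄, σ ∈ faces → σ ⊆ S
  down_closed : ∀ ⦃σ τ : Finset ℕ⦄, σ ∈ faces → τ ⊆ σ → τ ∈ faces

variable {S : Finset ℕ}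

/-- `K` has no ghost vertices: every vertex of `S` is a face. -/
def NoGhosts (K : SComplex S) : Prop := ∀ x ∈ S, ({x} : Finset ℕ) ∈ K.faces

/-- The full subcomplex `K_J = {σ ∩ J : σ ∈ K}`. -/
def SComplex.restrict (K : SComplex S) (J : Finset ℕ) : SComplex S where
  faces := {τ | ∃ σ ∈ K.faces, τ = σ ∩ J}
  empty_mem := ⟨∅, K.empty_mem, by simp⟩
  faces_subset := by
    rintro τ ⟨σ, hσ, rfl⟩
    exact Finset.inter_subset_left.trans (K.faces_subset hσ)
  down_closed := by
    rintro σ' τ ⟨σ, hσ, rfl⟩ hτ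
    refine ⟨τ, K.down_closed hσ (hτ.trans Finset.inter_subset_left), ?_⟩
    exact (Finset.inter_eq_left.mpr (hτ.trans Finset.inter_subset_right)).symm

/-- The full simplex `⟨ρ⟩` on a vertex set `ρ ⊆ S`, viewed as a complex on `S`. -/
def simplexOn (ρ : Finset ℕ) (h : ρ ⊆ S) : SComplex S where
  faces := {τ | τ ⊆ ρ}
  empty_mem := Finset.empty_subset ρ
  faces_subset := fun _ hσ => hσ.trans h
  down_closed := fun _ _ hσ hτ => hτ.trans hσ

/-- Union of two simplicial complexes on the same vertex set. -/
def SComplex.union (K1 K2 : SComplex S) : SComplex S where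
  faces := K1.faces ∪ K2.faces
  empty_mem := Or.inl K1.empty_mem
  faces_subset := by
    rintro σ (h | h)
    exacts [K1.faces_subset h, K2.faces_subset h]
  down_closed := by
    rintro σ τ (h | h) hτ
    exacts [Or.inl (K1.down_closed h hτ), Or.inr (K2.down_closed h hτ)]

/-- `K = K¹ ⊔_σ K²` : `K` is the face sum of `K¹` and `K²` along the
(possibly empty) face `σ`, which is a proper face of both. -/
structure IsFaceSum (K K1 K2 : SComplex S) (σ : Finset ℕ) : Prop where
  union : K.faces = K1.faces ∪ K2.faces
  inter : K1.faces ∩ K2.faces = {τ : Finset ℕ | τ ⊆ σ}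
  mem1 : σ ∈ K1.faces
  mem2 : σ ∈ K2.faces
  proper1 : K1.faces ≠ {τ : Finset ℕ | τ ⊆ σ}
  proper2 : K2.faces ≠ {τ : Finset ℕ | τ ⊆ σ}

/-- `K` is wedge-decomposable if it is a face sum `K¹ ⊔_σ K²`. -/
def WedgeDecomposable (K : SComplex S) : Prop :=
  ∃ K1 K2 : SComplex S, ∃ σ : Finset ℕ, IsFaceSum K K1 K2 σ

lemma IsFaceSum.le1 {K K1 K2 : SComplex S} {σ : Finset ℕ} (h : IsFaceSum K K1 K2 σ) :
    K1.faces ⊆ K.faces := h.union ▸ Set.subset_union_left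

lemma IsFaceSum.le2 {K K1 K2 : SComplex S} {σ : Finset ℕ} (h : IsFaceSum K K1 K2 σ) :
    K2.faces ⊆ K.faces := h.union ▸ Set.subset_union_right

open Classical in
/-- The effective vertex set `V(K)`: the set of non-ghost vertices. -/
noncomputable def effVerts (K : SComplex S) : Finset ℕ :=
  S.filter (fun x => ({x} : Finset ℕ) ∈ K.faces)

open Classical in
/-- The set of ghost vertices of `K`. -/
noncomputable def ghostVerts (K : SComplex S) : Finset ℕ :=
  S.filter (fun x => ({x} : Finset ℕ) ∉ K.faces)

open Classical in
lemma effVerts_subset (K : SComplex S) : effVerts K ⊆ S := Finset.filter_subset _ _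

open Classical in
lemma face_subset_effVerts (K : SComplex S) {σ : Finset ℕ} (h : σ ∈ K.faces) :
    σ ⊆ effVerts K := by
  intro x hx
  rw [effVerts, Finset.mem_filter]
  exact ⟨K.faces_subset h hx, K.down_closed h (Finset.singleton_subset_iff.mpr hx)⟩

/-- `L = ⟨V(K¹)⟩ ⊔_σ ⟨V(K²)⟩`, the face sum of the full simplices on the
effective vertex sets. -/
noncomputable def wedgeL (K1 K2 : SComplex S) : SComplex S :=
  (simplexOn (effVerts K1) (effVerts_subset K1)).union
    (simplexOn (effVerts K2) (effVerts_subset K2))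

lemma le_wedgeL {K K1 K2 : SComplex S} {σ : Finset ℕ} (h : IsFaceSum K K1 K2 σ) :
    K.faces ⊆ (wedgeL K1 K2).faces := by
  intro τ hτ
  rw [h.union] at hτ
  rcases hτ with hτ | hτ
  · exact Or.inl (face_subset_effVerts K1 hτ)
  · exact Or.inr (face_subset_effVerts K2 hτ)

/-! ### Reduced simplicial homology (augmented, ℤ coefficients) -/

/-- Faces of `K` with `k` vertices (so of dimension `k - 1`). -/
abbrev Face (K : SComplex S) (k : ℤ) : Type :=
  {σ : Finset ℕ // σ ∈ K.faces ∧ (σ.card : ℤ) = k}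

/-- The group of augmented simplicial `ℤ`-chains of `K` spanned by faces with `k`
vertices (this is the chain group in homological degree `k - 1`; for `k = 0` it is
spanned by the empty face). -/
abbrev Chains (K : SComplex S) (k : ℤ) : Type := Face K k →₀ ℤ

open Classical in
/-- The simplicial boundary map, sending a face `σ` with `j` vertices to the
alternating sum of its codimension-one subfaces (recorded in `Chains K k`;
it is the usual boundary when `k = j - 1`, and `0` otherwise). -/
noncomputable def bdry (K : SComplex S) (j k : ℤ) : Chains K j →+ Chains K k :=
  Finsupp.liftAddHom fun σ =>
    (zmultiplesHom (Chains K k)) (∑ x ∈ σ.1,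
      ((-1 : ℤ) ^ ((σ.1.filter (fun y => y < x)).card)) •
        (if h : (σ.1.erase x ∈ K.faces ∧ (((σ.1.erase x).card : ℤ)) = k) then
          Finsupp.single (⟨σ.1.erase x, h⟩ : Face K k) (1 : ℤ) else 0))

/-- The subgroup of reduced `n`-cycles. -/
noncomputable abbrev cycles (K : SComplex S) (n : ℤ) : AddSubgroup (Chains K (n + 1)) :=
  (bdry K (n + 1) n).ker

/-- The reduced `n`-boundaries, viewed inside the `n`-cycles. -/
noncomputable abbrev boundariesIn (K : SComplex S) (n : ℤ) : AddSubgroup (cycles K n) :=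
  (bdry K (n + 2) (n + 1)).range.comap (cycles K n).subtype

/-- Reduced simplicial homology `H̃_n(K; ℤ)` of the simplicial complex `K`,
computed from the augmented simplicial chain complex. -/
noncomputable abbrev RH (K : SComplex S) (n : ℤ) : Type :=
  cycles K n ⧸ boundariesIn K n

/-- The chain map induced by an inclusion of simplicial complexes. -/
noncomputable def chainMap {K1 K2 : SComplex S} (h : K1.faces ⊆ K2.faces) (k : ℤ) :
    Chains K1 k →+ Chains K2 k :=
  Finsupp.mapDomain.addMonoidHom (fun σ => (⟨σ.1, h σ.2.1, σ.2.2⟩ : Face K2 k))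

open Classical in
lemma bdry_chainMap {K1 K2 : SComplex S} (h : K1.faces ⊆ K2.faces) (j k : ℤ) (c : Chains K1 j) :
    bdry K2 j k (chainMap h j c) = chainMap h k (bdry K1 j k c) := by
  have hmap : ∀ (K1 K2 : SComplex S) (h : K1.faces ⊆ K2.faces) (k : ℤ) (a : Face K1 k) (b : ℤ),
      chainMap h k (Finsupp.single a b) =
        Finsupp.single (⟨a.1, h a.2.1, a.2.2⟩ : Face K2 k) b := by
    intro K1 K2 h k a b
    exact Finsupp.mapDomain_single
  induction c using Finsupp.induction_linear with
  | zero => simp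
  | add f g hf hg => simp only [map_add, hf, hg]
  | single σ b =>
    rw [hmap, bdry, bdry, Finsupp.liftAddHom_apply_single, Finsupp.liftAddHom_apply_single,
      zmultiplesHom_apply, zmultiplesHom_apply, map_zsmul]
    congr 1
    rw [map_sum]
    refine Finset.sum_congr rfl fun x hx => ?_
    rw [map_zsmul]
    congr 1
    by_cases hc : ((σ.1.erase x).card : ℤ) = k
    · have h1 : σ.1.erase x ∈ K1.faces ∧ ((σ.1.erase x).card : ℤ) = k :=
        ⟨K1.down_closed σ.2.1 (Finset.erase_subset _ _), hc⟩
      have h2 : σ.1.erase x ∈ K2.faces ∧ ((σ.1.erase x).card : ℤ) = k :=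
        ⟨h h1.1, hc⟩
      rw [dif_pos h1, dif_pos h2, hmap]
    · have h1 : ¬(σ.1.erase x ∈ K1.faces ∧ ((σ.1.erase x).card : ℤ) = k) := fun h' => hc h'.2
      have h2 : ¬(σ.1.erase x ∈ K2.faces ∧ ((σ.1.erase x).card : ℤ) = k) := fun h' => hc h'.2
      rw [dif_neg h1, dif_neg h2, map_zero]

/-- The map on cycles induced by an inclusion of simplicial complexes. -/
noncomputable def cycleMap {K1 K2 : SComplex S} (h : K1.faces ⊆ K2.faces) (n : ℤ) :
    cycles K1 n →+ cycles K2 n :=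
  AddMonoidHom.codRestrict ((chainMap h (n + 1)).comp (cycles K1 n).subtype)
    (cycles K2 n) (by
      rintro ⟨x, hx⟩
      rw [AddMonoidHom.mem_ker]
      have hx0 : bdry K1 (n + 1) n x = 0 := hx
      show bdry K2 (n + 1) n (chainMap h (n + 1) x) = 0
      rw [bdry_chainMap h, hx0, map_zero])

/-- The map `H̃_n(K¹) → H̃_n(K²)` induced by an inclusion `K¹ ⊆ K²` of
simplicial complexes. -/
noncomputable def inducedRH {K1 K2 : SComplex S} (h : K1.faces ⊆ K2.faces) (n : ℤ) :
    RH K1 n →+ RH K2 n :=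
  QuotientAddGroup.map _ _ (cycleMap h n) (by
    rintro z hz
    obtain ⟨c, hc⟩ := hz
    refine ⟨chainMap h (n + 2) c, ?_⟩
    show bdry K2 (n + 2) (n + 1) (chainMap h (n + 2) c) = (cycleMap h n z : Chains K2 (n + 1))
    rw [bdry_chainMap h]
    show chainMap h (n + 1) (bdry K1 (n + 2) (n + 1) c) = chainMap h (n + 1) (z : Chains K1 (n + 1))
    exact congrArg _ hc)

lemma cycleMap_comp {K1 K2 K3 : SComplex S} (h1 : K1.faces ⊆ K2.faces)
    (h2 : K2.faces ⊆ K3.faces) (n : ℤ) (z : cycles K1 n) :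
    cycleMap h2 n (cycleMap h1 n z) = cycleMap (h1.trans h2) n z := by
  apply Subtype.ext
  show Finsupp.mapDomain _ (Finsupp.mapDomain _ (z : Chains K1 (n + 1))) = Finsupp.mapDomain _ _
  rw [← Finsupp.mapDomain_comp]
  rfl

lemma inducedRH_comp {K1 K2 K3 : SComplex S} (h1 : K1.faces ⊆ K2.faces)
    (h2 : K2.faces ⊆ K3.faces) (n : ℤ) (a : RH K1 n) :
    inducedRH h2 n (inducedRH h1 n a) = inducedRH (h1.trans h2) n a := by
  induction a using QuotientAddGroup.induction_on with
  | H z =>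
    show QuotientAddGroup.mk _ = QuotientAddGroup.mk _
    rw [cycleMap_comp]

lemma restrict_mono {K1 K2 : SComplex S} (h : K1.faces ⊆ K2.faces) (J : Finset ℕ) :
    (K1.restrict J).faces ⊆ (K2.restrict J).faces := by
  rintro τ ⟨σ, hσ, rfl⟩
  exact ⟨σ, h hσ, rfl⟩

lemma restrict_le_insert (K : SComplex S) (x : ℕ) (J : Finset ℕ) :
    (K.restrict J).faces ⊆ (K.restrict (insert x J)).faces := by
  rintro τ ⟨σ, hσ, rfl⟩
  refine ⟨σ ∩ J, K.down_closed hσ Finset.inter_subset_left, ?_⟩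
  exact (Finset.inter_eq_left.mpr
    (Finset.inter_subset_right.trans (Finset.subset_insert x J))).symm

/-! ### The double homology complex `CH` and double homology `HH` -/

/-- Index type: subsets `J ⊆ S` with `|J| = l`. -/
abbrev Idx (S : Finset ℕ) (l : ℤ) : Type := {J : Finset ℕ // J ⊆ S ∧ (J.card : ℤ) = l}

/-- `CH_n^l(Z_K) = ⊕_{J ⊆ S, |J| = l} H̃_{n-1}(K_J)`. -/
noncomputable abbrev CH (K : SComplex S) (n l : ℤ) : Type :=
  ⨁ (J : Idx S l), RH (K.restrict J.1) (n - 1)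

/-- The sign `ε(x, J) = (-1)^{#{j ∈ J : j < x}}`. -/
def eps (x : ℕ) (J : Finset ℕ) : ℤ := (-1 : ℤ) ^ ((J.filter (fun y => y < x)).card)

/-- The sign `(-1)^n` for `n : ℤ`. -/
def sgn (n : ℤ) : ℤ := (((-1 : ℤˣ) ^ n : ℤˣ) : ℤ)

set_option maxHeartbeats 1000000 in
open Classical in
/-- The differential of the double homology complex: on the summand indexed by
`J` (with `|J| = l`) it is `(-1)^n Σ_{x ∈ S∖J} ε(x,J) φ_{J,x}`, where `φ_{J,x}`
is induced by the inclusion `K_J ↪ K_{J∪{x}}` (recorded in `CH K n l'`; it is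
the actual differential when `l' = l + 1`, and `0` otherwise). -/
noncomputable def dCH (K : SComplex S) (n l l' : ℤ) : CH K n l →+ CH K n l' :=
  DirectSum.toAddMonoid fun J =>
    ∑ x ∈ S \ J.1,
      (sgn n * eps x J.1) •
        (if h : (insert x J.1 ⊆ S ∧ (((insert x J.1).card : ℤ)) = l') then
          (DirectSum.of (fun J' : Idx S l' => RH (K.restrict J'.1) (n - 1))
              (⟨insert x J.1, h⟩ : Idx S l')).comp
            (inducedRH (restrict_le_insert K x J.1) (n - 1))
        else 0)

/-- The double homology `HH_n^l(Z_K)`: the `l`-th cohomology of `(CH_n^*(Z_K), d)`. -/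
noncomputable abbrev HH (K : SComplex S) (n l : ℤ) : Type :=
  (dCH K n l (l + 1)).ker ⧸
    ((dCH K n (l - 1) l).range.comap (dCH K n l (l + 1)).ker.subtype)

set_option maxHeartbeats 1000000 in
/-- The map `CH_n^l(Z_{K¹}) → CH_n^l(Z_{K²})` induced by an inclusion `K¹ ⊆ K²`. -/
noncomputable def CHmap {K1 K2 : SComplex S} (h : K1.faces ⊆ K2.faces) (n l : ℤ) :
    CH K1 n l →+ CH K2 n l :=
  DirectSum.toAddMonoid fun J =>
    (DirectSum.of (fun J' : Idx S l => RH (K2.restrict J'.1) (n - 1)) J).comp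
      (inducedRH (restrict_mono h J.1) (n - 1))

set_option maxHeartbeats 2000000 in
open Classical in
/-- Naturality of the differential `d` with respect to inclusion-induced maps. -/
lemma CHmap_dCH {K1 K2 : SComplex S} (h : K1.faces ⊆ K2.faces) (n l l' : ℤ) :
    (CHmap h n l').comp (dCH K1 n l l') = (dCH K2 n l l').comp (CHmap h n l) := by
  refine DirectSum.addHom_ext fun J a => ?_
  simp only [AddMonoidHom.comp_apply, dCH, CHmap, DirectSum.toAddMonoid_of]
  rw [AddMonoidHom.finset_sum_apply, AddMonoidHom.finset_sum_apply, map_sum]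
  refine Finset.sum_congr rfl fun x hx => ?_
  rw [AddMonoidHom.smul_apply, AddMonoidHom.smul_apply, map_zsmul]
  congr 1
  by_cases hc : insert x J.1 ⊆ S ∧ ((insert x J.1).card : ℤ) = l'
  · rw [dif_pos hc, dif_pos hc]
    rw [AddMonoidHom.comp_apply, AddMonoidHom.comp_apply, DirectSum.toAddMonoid_of,
      AddMonoidHom.comp_apply]
    congr 1
    rw [inducedRH_comp, inducedRH_comp]
  · rw [dif_neg hc, dif_neg hc]
    simp

set_option maxHeartbeats 2000000 in
/-- The map `HH_n^l(Z_{K¹}) → HH_n^l(Z_{K²})` induced by an inclusion `K¹ ⊆ K²`. -/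
noncomputable def HHmap {K1 K2 : SComplex S} (h : K1.faces ⊆ K2.faces) (n l : ℤ) :
    HH K1 n l →+ HH K2 n l :=
  QuotientAddGroup.map _ _
    (AddMonoidHom.codRestrict
      ((CHmap h n l).comp (dCH K1 n l (l + 1)).ker.subtype)
      (dCH K2 n l (l + 1)).ker (by
        rintro ⟨x, hx⟩
        rw [AddMonoidHom.mem_ker]
        have hx0 : dCH K1 n l (l + 1) x = 0 := hx
        show dCH K2 n l (l + 1) (CHmap h n l x) = 0
        have hnat := congrArg (fun f => f x) (CHmap_dCH h n l (l + 1))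
        simp only [AddMonoidHom.comp_apply] at hnat
        rw [← hnat, hx0, map_zero]))
    (by
      rintro z hz
      obtain ⟨c, hc⟩ := hz
      refine ⟨CHmap h n (l - 1) c, ?_⟩
      have hnat := congrArg (fun f => f c) (CHmap_dCH h n (l - 1) l)
      simp only [AddMonoidHom.comp_apply] at hnat
      show dCH K2 n (l - 1) l (CHmap h n (l - 1) c) = CHmap h n l ((z : CH K1 n l))
      rw [← hnat]
      exact congrArg _ hc)

/-! ### Path connectivity -/

/-- Two vertices are related if they span an edge of `K`. -/
def EdgeRel (K : SComplex S) (a b : ℕ) : Prop := ({a, b} : Finset ℕ) ∈ K.faces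

/-- Reachability by a chain of edges. -/
def Reach (K : SComplex S) : ℕ → ℕ → Prop := Relation.ReflTransGen (EdgeRel K)

/-- `K` is path-connected: any two vertices are joined by a chain of edges. -/
def IsPathConnected (K : SComplex S) : Prop :=
  ∀ a b : ℕ, ({a} : Finset ℕ) ∈ K.faces → ({b} : Finset ℕ) ∈ K.faces → Reach K a b

/-- The number of path components of `K` (equivalence classes of vertices under
the relation generated by sharing an edge). -/
noncomputable def numComponents (K : SComplex S) : ℕ :=
  Nat.card (Quot (fun a b : {x : ℕ // ({x} : Finset ℕ) ∈ K.faces} => Reach K a.1 b.1))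


/-! ### Auxiliary chain-level lemmas -/

section AuxChains

variable {S : Finset ℕ}

open Classical in
lemma bdry_single (K : SComplex S) (j k : ℤ) (σ : Face K j) (b : ℤ) :
    bdry K j k (Finsupp.single σ b) =
      b • ∑ x ∈ σ.1, ((-1 : ℤ) ^ ((σ.1.filter (fun y => y < x)).card)) •
        (if h : (σ.1.erase x ∈ K.faces ∧ (((σ.1.erase x).card : ℤ)) = k) then
          Finsupp.single (⟨σ.1.erase x, h⟩ : Face K k) (1 : ℤ) else 0) := by
  rw [bdry, Finsupp.liftAddHom_apply_single, zmultiplesHom_apply]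

lemma chainMap_single {K1 K2 : SComplex S} (h : K1.faces ⊆ K2.faces) (k : ℤ)
    (σ : Face K1 k) (b : ℤ) :
    chainMap h k (Finsupp.single σ b) =
      Finsupp.single (⟨σ.1, h σ.2.1, σ.2.2⟩ : Face K2 k) b :=
  Finsupp.mapDomain_single

lemma faceIncl_injective {K1 K2 : SComplex S} (h : K1.faces ⊆ K2.faces) (k : ℤ) :
    Function.Injective (fun σ : Face K1 k => (⟨σ.1, h σ.2.1, σ.2.2⟩ : Face K2 k)) := by
  rintro ⟨a, ha⟩ ⟨b, hb⟩ hab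
  simp only [Subtype.mk.injEq] at hab ⊢
  exact hab

lemma chainMap_injective {K1 K2 : SComplex S} (h : K1.faces ⊆ K2.faces) (k : ℤ) :
    Function.Injective (chainMap h k) :=
  Finsupp.mapDomain_injective (faceIncl_injective h k)

lemma chainMap_apply_mem {K1 K2 : SComplex S} (h : K1.faces ⊆ K2.faces) (k : ℤ)
    (c : Chains K1 k) (τ : Face K2 k) (hτ : τ.1 ∈ K1.faces) :
    chainMap h k c τ = c ⟨τ.1, hτ, τ.2.2⟩ := by
  have h1 : τ = (fun σ : Face K1 k => (⟨σ.1, h σ.2.1, σ.2.2⟩ : Face K2 k)) ⟨τ.1, hτ, τ.2.2⟩ :=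
    Subtype.ext rfl
  rw [chainMap, Finsupp.mapDomain.addMonoidHom_apply]
  conv_lhs => rw [h1]
  exact Finsupp.mapDomain_apply (faceIncl_injective h k) c _

lemma chainMap_apply_not_mem {K1 K2 : SComplex S} (h : K1.faces ⊆ K2.faces) (k : ℤ)
    (c : Chains K1 k) (τ : Face K2 k) (hτ : τ.1 ∉ K1.faces) :
    chainMap h k c τ = 0 := by
  rw [chainMap, Finsupp.mapDomain.addMonoidHom_apply]
  refine Finsupp.mapDomain_notin_range _ _ ?_
  rintro ⟨a, rfl⟩
  exact hτ a.2.1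

lemma chainMap_comp {K1 K2 K3 : SComplex S} (h1 : K1.faces ⊆ K2.faces)
    (h2 : K2.faces ⊆ K3.faces) (k : ℤ) (c : Chains K1 k) :
    chainMap h2 k (chainMap h1 k c) = chainMap (h1.trans h2) k c := by
  show Finsupp.mapDomain _ (Finsupp.mapDomain _ c) = Finsupp.mapDomain _ c
  rw [← Finsupp.mapDomain_comp]
  rfl

lemma chains_eq_zero {M : SComplex S} {k : ℤ}
    (h : ∀ τ : Finset ℕ, τ ∈ M.faces → (τ.card : ℤ) ≠ k) (c : Chains M k) : c = 0 := by
  ext τ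
  exact absurd τ.2.2 (h τ.1 τ.2.1)

lemma exists_chain_lift {C A : SComplex S} (h : C.faces ⊆ A.faces) (k : ℤ)
    (a : Chains A k) (hs : ∀ σ : Face A k, a σ ≠ 0 → σ.1 ∈ C.faces) :
    ∃ w : Chains C k, chainMap h k w = a := by
  classical
  refine ⟨Finsupp.comapDomain (fun σ : Face C k => (⟨σ.1, h σ.2.1, σ.2.2⟩ : Face A k)) a
    ((faceIncl_injective h k).injOn), ?_⟩
  ext τ
  by_cases hτ : τ.1 ∈ C.faces
  · rw [chainMap_apply_mem _ _ _ _ hτ, Finsupp.comapDomain_apply]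
  · rw [chainMap_apply_not_mem _ _ _ _ hτ]
    by_contra hne
    exact hτ (hs τ (fun h0 => hne h0.symm))

lemma exists_decomp {M A B : SComplex S} (hA : A.faces ⊆ M.faces) (hB : B.faces ⊆ M.faces)
    (hcover : M.faces ⊆ A.faces ∪ B.faces) (k : ℤ) (c : Chains M k) :
    ∃ (a : Chains A k) (b : Chains B k), chainMap hA k a + chainMap hB k b = c := by
  induction c using Finsupp.induction_linear with
  | zero => exact ⟨0, 0, by simp⟩
  | add f g hf hg =>
    obtain ⟨a1, b1, h1⟩ := hf
    obtain ⟨a2, b2, h2⟩ := hg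
    exact ⟨a1 + a2, b1 + b2, by rw [map_add, map_add]; rw [← h1, ← h2]; abel⟩
  | single σ b =>
    rcases hcover σ.2.1 with hm | hm
    · refine ⟨Finsupp.single ⟨σ.1, hm, σ.2.2⟩ b, 0, ?_⟩
      rw [chainMap_single, map_zero, add_zero]
    · refine ⟨0, Finsupp.single ⟨σ.1, hm, σ.2.2⟩ b, ?_⟩
      rw [chainMap_single, map_zero, zero_add]

open Classical in
lemma bdry_eq_zero {K : SComplex S} (j k : ℤ) (h : k ≠ j - 1) (c : Chains K j) :
    bdry K j k c = 0 := by
  induction c using Finsupp.induction_linear with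
  | zero => simp
  | add f g hf hg => rw [map_add, hf, hg, add_zero]
  | single σ b =>
    rw [bdry_single]
    refine smul_eq_zero_of_right _ (Finset.sum_eq_zero fun x hx => ?_)
    rw [dif_neg, smul_zero]
    rintro ⟨-, hcard⟩
    have hc1 : σ.1.card = (σ.1.erase x).card + 1 := (Finset.card_erase_add_one hx).symm
    have hc2 : (σ.1.card : ℤ) = j := σ.2.2
    omega

end AuxChains

section AuxCone

variable {S : Finset ℕ}

lemma card_filter_erase (σ : Finset ℕ) (x v : ℕ) (hx : x ∈ σ) :
    ((σ.erase x).filter (fun z => z < v)).card + (if x < v then 1 else 0)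
      = (σ.filter (fun z => z < v)).card := by
  classical
  rw [Finset.filter_erase]
  by_cases h : x < v
  · have hmem : x ∈ σ.filter (fun z => z < v) := Finset.mem_filter.mpr ⟨hx, h⟩
    rw [if_pos h, Finset.card_erase_of_mem hmem]
    have h0 : 0 < (σ.filter (fun z => z < v)).card := Finset.card_pos.mpr ⟨x, hmem⟩
    omega
  · have hx' : x ∉ σ.filter (fun z => z < v) := fun hmem => h (Finset.mem_filter.mp hmem).2
    rw [if_neg h, Finset.erase_eq_of_notMem hx', add_zero]

lemma sign_antisym {σ : Finset ℕ} {x y : ℕ} (hx : x ∈ σ) (hy : y ∈ σ) (hxy : x ≠ y) :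
    (-1 : ℤ) ^ ((σ.filter (fun z => z < x)).card) *
      (-1 : ℤ) ^ (((σ.erase x).filter (fun z => z < y)).card)
    = -((-1 : ℤ) ^ ((σ.filter (fun z => z < y)).card) *
      (-1 : ℤ) ^ (((σ.erase y).filter (fun z => z < x)).card)) := by
  have h1 := card_filter_erase σ x y hx
  have h2 := card_filter_erase σ y x hy
  rcases hxy.lt_or_gt with h | h
  · rw [if_pos h] at h1
    rw [if_neg (not_lt.mpr h.le)] at h2
    have e1 : (σ.filter (fun z => z < y)).card = ((σ.erase x).filter (fun z => z < y)).card + 1 := by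
      omega
    have e2 : (σ.filter (fun z => z < x)).card = ((σ.erase y).filter (fun z => z < x)).card := by
      omega
    rw [e1, e2, pow_succ]
    ring
  · rw [if_neg (not_lt.mpr h.le)] at h1
    rw [if_pos h] at h2
    have e1 : (σ.filter (fun z => z < x)).card = ((σ.erase y).filter (fun z => z < x)).card + 1 := by
      omega
    have e2 : (σ.filter (fun z => z < y)).card = ((σ.erase x).filter (fun z => z < y)).card := by
      omega
    rw [e1, e2, pow_succ]
    ring

open Classical in
lemma bdry_bdry (K : SComplex S) (j k l : ℤ) (c : Chains K j) :
    bdry K k l (bdry K j k c) = 0 := by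
  by_cases hk : k = j - 1
  · by_cases hl : l = k - 1
    · subst hk hl
      induction c using Finsupp.induction_linear with
      | zero => simp
      | add f g hf hg => rw [map_add, map_add, hf, hg, add_zero]
      | single σ b =>
        rw [bdry_single, map_zsmul, map_sum]
        refine smul_eq_zero_of_right _ ?_
        set F : ℕ → ℕ → Chains K (j-1-1) := fun x y =>
          ((-1:ℤ) ^ ((σ.1.filter (fun z => z < x)).card) *
           (-1:ℤ) ^ (((σ.1.erase x).filter (fun z => z < y)).card)) •
          (if h : ((σ.1.erase x).erase y ∈ K.faces ∧ (((σ.1.erase x).erase y).card : ℤ) = j-1-1)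
            then Finsupp.single (⟨(σ.1.erase x).erase y, h⟩ : Face K (j-1-1)) (1:ℤ) else 0)
          with hF
        have key : ∀ x ∈ σ.1,
            (bdry K (j-1) (j-1-1)) (((-1:ℤ) ^ ((σ.1.filter (fun y => y < x)).card)) •
              (if h : (σ.1.erase x ∈ K.faces ∧ ((σ.1.erase x).card : ℤ) = j - 1) then
                Finsupp.single (⟨σ.1.erase x, h⟩ : Face K (j-1)) (1:ℤ) else 0))
            = ∑ y ∈ σ.1.erase x, F x y := by
          intro x hx
          have hcond : σ.1.erase x ∈ K.faces ∧ ((σ.1.erase x).card : ℤ) = j - 1 := by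
            refine ⟨K.down_closed σ.2.1 (Finset.erase_subset _ _), ?_⟩
            have hce := Finset.card_erase_add_one hx
            have hj : (σ.1.card : ℤ) = j := σ.2.2
            omega
          rw [dif_pos hcond, map_zsmul, bdry_single, one_smul, Finset.smul_sum]
          refine Finset.sum_congr rfl fun y hy => ?_
          rw [smul_smul]
        rw [Finset.sum_congr rfl key]
        have hFdiag : ∀ x, F x x = 0 := by
          intro x
          have hcc : (((σ.1.erase x).erase x).card : ℤ) ≠ j - 1 - 1 := by
            rw [Finset.erase_idem]
            by_cases hx : x ∈ σ.1
            · have hce := Finset.card_erase_add_one hx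
              have hj : (σ.1.card : ℤ) = j := σ.2.2
              omega
            · rw [Finset.erase_eq_of_notMem hx]
              have hj : (σ.1.card : ℤ) = j := σ.2.2
              omega
          rw [hF]
          simp only []
          rw [dif_neg (fun hcond => hcc hcond.2), smul_zero]
        have hFanti : ∀ x ∈ σ.1, ∀ y ∈ σ.1, F x y + F y x = 0 := by
          intro x hx y hy
          by_cases hxy : x = y
          · subst hxy
            rw [hFdiag, add_zero]
          · rw [hF]
            simp only []
            have hee : (σ.1.erase y).erase x = (σ.1.erase x).erase y := Finset.erase_right_comm
            by_cases hcond : ((σ.1.erase x).erase y ∈ K.faces ∧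
                (((σ.1.erase x).erase y).card : ℤ) = j-1-1)
            · have hcond2 : ((σ.1.erase y).erase x ∈ K.faces ∧
                  (((σ.1.erase y).erase x).card : ℤ) = j-1-1) := by rw [hee]; exact hcond
              rw [dif_pos hcond, dif_pos hcond2]
              have hface : (⟨(σ.1.erase y).erase x, hcond2⟩ : Face K (j-1-1))
                  = ⟨(σ.1.erase x).erase y, hcond⟩ := Subtype.ext hee
              rw [hface, sign_antisym hx hy hxy, neg_smul, neg_add_cancel]
            · have hcond2 : ¬((σ.1.erase y).erase x ∈ K.faces ∧
                  (((σ.1.erase y).erase x).card : ℤ) = j-1-1) := by rw [hee]; exact hcond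
              rw [dif_neg hcond, dif_neg hcond2]
              simp
        have hS : ∀ x ∈ σ.1, ∑ y ∈ σ.1.erase x, F x y = ∑ y ∈ σ.1, F x y :=
          fun x _ => Finset.sum_erase _ (hFdiag x)
        rw [Finset.sum_congr rfl hS]
        have hdouble : ((∑ x ∈ σ.1, ∑ y ∈ σ.1, F x y) + ∑ x ∈ σ.1, ∑ y ∈ σ.1, F x y) = 0 := by
          conv_lhs => lhs; rw [Finset.sum_comm]
          rw [← Finset.sum_add_distrib]
          refine Finset.sum_eq_zero fun x hx => ?_
          rw [← Finset.sum_add_distrib]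
          refine Finset.sum_eq_zero fun y hy => ?_
          rw [add_comm]
          exact hFanti x hx y hy
        ext τ
        have h2 := congrArg (fun c => c τ) hdouble
        simp only [Finsupp.add_apply, Finsupp.coe_zero, Pi.zero_apply] at h2 ⊢
        omega
    · rw [bdry_eq_zero k l hl]
  · rw [bdry_eq_zero j k hk, map_zero]

open Classical in
/-- The cone operator at apex `v`. -/
noncomputable def cone (M : SComplex S) (v : ℕ) (k k' : ℤ) : Chains M k →+ Chains M k' :=
  Finsupp.liftAddHom fun α =>
    (zmultiplesHom (Chains M k'))
      (if h : (v ∉ α.1 ∧ insert v α.1 ∈ M.faces ∧ (((insert v α.1).card : ℤ)) = k') then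
        ((-1 : ℤ) ^ ((α.1.filter (fun y => y < v)).card)) •
          Finsupp.single (⟨insert v α.1, h.2⟩ : Face M k') (1 : ℤ) else 0)

open Classical in
lemma cone_single (M : SComplex S) (v : ℕ) (k k' : ℤ) (α : Face M k) (b : ℤ) :
    cone M v k k' (Finsupp.single α b) =
      b • (if h : (v ∉ α.1 ∧ insert v α.1 ∈ M.faces ∧ (((insert v α.1).card : ℤ)) = k') then
        ((-1 : ℤ) ^ ((α.1.filter (fun y => y < v)).card)) •
          Finsupp.single (⟨insert v α.1, h.2⟩ : Face M k') (1 : ℤ) else 0) := by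
  rw [cone, Finsupp.liftAddHom_apply_single, zmultiplesHom_apply]

end AuxCone

section AuxConeIdent

variable {S : Finset ℕ}

open Classical in
lemma bdry_single' (K : SComplex S) (j k : ℤ) (τ : Finset ℕ) (hτ : τ ∈ K.faces)
    (hc : (τ.card : ℤ) = j) (b : ℤ) :
    bdry K j k (Finsupp.single (⟨τ, hτ, hc⟩ : Face K j) b) =
      b • ∑ x ∈ τ, ((-1 : ℤ) ^ ((τ.filter (fun y => y < x)).card)) •
        (if h : (τ.erase x ∈ K.faces ∧ (((τ.erase x).card : ℤ)) = k) then
          Finsupp.single (⟨τ.erase x, h⟩ : Face K k) (1 : ℤ) else 0) := by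
  rw [bdry_single]

open Classical in
lemma cone_single' (M : SComplex S) (v : ℕ) (k k' : ℤ) (τ : Finset ℕ) (hτ : τ ∈ M.faces)
    (hc : (τ.card : ℤ) = k) (b : ℤ) :
    cone M v k k' (Finsupp.single (⟨τ, hτ, hc⟩ : Face M k) b) =
      b • (if h : (v ∉ τ ∧ insert v τ ∈ M.faces ∧ (((insert v τ).card : ℤ)) = k') then
        ((-1 : ℤ) ^ ((τ.filter (fun y => y < v)).card)) •
          Finsupp.single (⟨insert v τ, h.2⟩ : Face M k') (1 : ℤ) else 0) := by
  rw [cone_single]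

open Classical in
lemma cone_ident (M : SComplex S) (v : ℕ) (hv : ∀ α ∈ M.faces, insert v α ∈ M.faces)
    (j k l : ℤ) (hj : j = k + 1) (hl : l = k - 1) (c : Chains M k) :
    bdry M j k (cone M v k j c) + cone M v l k (bdry M k l c) = c := by
  subst hj hl
  induction c using Finsupp.induction_linear with
  | zero => simp
  | add f g hf hg =>
    simp only [map_add]
    conv_rhs => rw [← hf, ← hg]
    abel
  | single σ b =>
    by_cases hvσ : v ∈ σ.1
    · -- v ∈ σ : cone (single) = 0, and cone (bdry single) = single
      rw [cone_single, dif_neg (fun h => h.1 hvσ), smul_zero, map_zero, zero_add, bdry_single,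
        map_zsmul, map_sum]
      have key : ∀ x ∈ σ.1,
          cone M v (k-1) k (((-1:ℤ) ^ ((σ.1.filter (fun y => y < x)).card)) •
            (if h : (σ.1.erase x ∈ M.faces ∧ (((σ.1.erase x).card : ℤ)) = k - 1) then
              Finsupp.single (⟨σ.1.erase x, h⟩ : Face M (k-1)) (1:ℤ) else 0))
          = if x = v then Finsupp.single σ 1 else 0 := by
        intro x hx
        have hcond : σ.1.erase x ∈ M.faces ∧ ((σ.1.erase x).card : ℤ) = k - 1 := by
          refine ⟨M.down_closed σ.2.1 (Finset.erase_subset _ _), ?_⟩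
          have hce := Finset.card_erase_add_one hx
          have hk : (σ.1.card : ℤ) = k := σ.2.2
          omega
        rw [dif_pos hcond, map_zsmul, cone_single' M v (k-1) k _ hcond.1 hcond.2, one_smul]
        by_cases hxv : x = v
        · subst hxv
          have hcond2 : x ∉ σ.1.erase x ∧ insert x (σ.1.erase x) ∈ M.faces ∧
              ((insert x (σ.1.erase x)).card : ℤ) = k := by
            refine ⟨Finset.notMem_erase _ _, ?_, ?_⟩
            · rw [Finset.insert_erase hvσ]; exact σ.2.1
            · rw [Finset.insert_erase hvσ]; exact σ.2.2
          rw [dif_pos hcond2, if_pos rfl]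
          have hface : (⟨insert x (σ.1.erase x), hcond2.2⟩ : Face M k) = σ :=
            Subtype.ext (Finset.insert_erase hvσ)
          rw [hface, smul_smul]
          have hsign : ((σ.1.erase x).filter (fun y => y < x)) = σ.1.filter (fun y => y < x) := by
            rw [Finset.filter_erase, Finset.erase_eq_of_notMem]
            intro hmem
            exact absurd (Finset.mem_filter.mp hmem).2 (lt_irrefl x)
          rw [hsign, ← pow_add, Even.neg_one_pow ⟨_, rfl⟩, one_smul]
        · rw [if_neg hxv, dif_neg, smul_zero]
          rintro ⟨hnm, -, -⟩
          exact hnm (Finset.mem_erase.mpr ⟨fun h => hxv h.symm, hvσ⟩)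
      rw [Finset.sum_congr rfl key, Finset.sum_ite_eq' σ.1 v (fun _ => Finsupp.single σ 1),
        if_pos hvσ, Finsupp.smul_single, smul_eq_mul, mul_one]
    · -- v ∉ σ
      have hc1 : v ∉ σ.1 ∧ insert v σ.1 ∈ M.faces ∧ ((insert v σ.1).card : ℤ) = k + 1 := by
        refine ⟨hvσ, hv _ σ.2.1, ?_⟩
        rw [Finset.card_insert_of_notMem hvσ]
        have hk : (σ.1.card : ℤ) = k := σ.2.2
        push_cast
        omega
      have hstep1 : bdry M (k+1) k (cone M v k (k+1) (Finsupp.single σ b))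
          = Finsupp.single σ b +
            (b * (-1:ℤ) ^ ((σ.1.filter (fun y => y < v)).card)) •
              ∑ x ∈ σ.1, ((-1:ℤ) ^ (((insert v σ.1).filter (fun y => y < x)).card)) •
                (if h : ((insert v σ.1).erase x ∈ M.faces ∧
                    ((((insert v σ.1).erase x).card : ℤ)) = k) then
                  Finsupp.single (⟨(insert v σ.1).erase x, h⟩ : Face M k) (1:ℤ) else 0) := by
        rw [cone_single, dif_pos hc1, map_zsmul, map_zsmul,
          bdry_single' M (k+1) k _ hc1.2.1 hc1.2.2, one_smul, Finset.sum_insert hvσ]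
        have hcondv : (insert v σ.1).erase v ∈ M.faces ∧
            (((insert v σ.1).erase v).card : ℤ) = k := by
          rw [Finset.erase_insert hvσ]
          exact ⟨σ.2.1, σ.2.2⟩
        rw [dif_pos hcondv]
        have hface : (⟨(insert v σ.1).erase v, hcondv⟩ : Face M k) = σ :=
          Subtype.ext (Finset.erase_insert hvσ)
        rw [hface]
        have hfv : (insert v σ.1).filter (fun y => y < v) = σ.1.filter (fun y => y < v) := by
          rw [Finset.filter_insert, if_neg (lt_irrefl v)]
        rw [hfv, smul_add, smul_add]
        congr 1
        · rw [smul_smul, smul_smul, mul_assoc, ← pow_add, Even.neg_one_pow ⟨_, rfl⟩, mul_one,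
            Finsupp.smul_single, smul_eq_mul, mul_one]
        · rw [smul_smul]
      have hstep2 : cone M v (k-1) k (bdry M k (k-1) (Finsupp.single σ b))
          = b • ∑ x ∈ σ.1, (((-1:ℤ) ^ ((σ.1.filter (fun y => y < x)).card)) *
              ((-1:ℤ) ^ (((σ.1.erase x).filter (fun y => y < v)).card))) •
                (if h : (v ∉ σ.1.erase x ∧ insert v (σ.1.erase x) ∈ M.faces ∧
                    (((insert v (σ.1.erase x)).card : ℤ)) = k) then
                  Finsupp.single (⟨insert v (σ.1.erase x), h.2⟩ : Face M k) (1:ℤ) else 0) := by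
        rw [bdry_single, map_zsmul, map_sum]
        congr 1
        refine Finset.sum_congr rfl fun x hx => ?_
        have hcond : σ.1.erase x ∈ M.faces ∧ ((σ.1.erase x).card : ℤ) = k - 1 := by
          refine ⟨M.down_closed σ.2.1 (Finset.erase_subset _ _), ?_⟩
          have hce := Finset.card_erase_add_one hx
          have hk : (σ.1.card : ℤ) = k := σ.2.2
          omega
        rw [dif_pos hcond, map_zsmul, cone_single' M v (k-1) k _ hcond.1 hcond.2, one_smul]
        by_cases hcond2 : (v ∉ σ.1.erase x ∧ insert v (σ.1.erase x) ∈ M.faces ∧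
            (((insert v (σ.1.erase x)).card : ℤ)) = k)
        · rw [dif_pos hcond2, dif_pos hcond2, smul_smul]
        · rw [dif_neg hcond2, dif_neg hcond2, smul_zero, smul_zero]
      rw [hstep1, hstep2, add_assoc]
      have hcomb : ((b * (-1:ℤ) ^ ((σ.1.filter (fun y => y < v)).card)) •
              ∑ x ∈ σ.1, ((-1:ℤ) ^ (((insert v σ.1).filter (fun y => y < x)).card)) •
                (if h : ((insert v σ.1).erase x ∈ M.faces ∧
                    ((((insert v σ.1).erase x).card : ℤ)) = k) then
                  Finsupp.single (⟨(insert v σ.1).erase x, h⟩ : Face M k) (1:ℤ) else 0)) +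
            (b • ∑ x ∈ σ.1, (((-1:ℤ) ^ ((σ.1.filter (fun y => y < x)).card)) *
              ((-1:ℤ) ^ (((σ.1.erase x).filter (fun y => y < v)).card))) •
                (if h : (v ∉ σ.1.erase x ∧ insert v (σ.1.erase x) ∈ M.faces ∧
                    (((insert v (σ.1.erase x)).card : ℤ)) = k) then
                  Finsupp.single (⟨insert v (σ.1.erase x), h.2⟩ : Face M k) (1:ℤ) else 0)) = 0 := by
        rw [Finset.smul_sum, Finset.smul_sum, ← Finset.sum_add_distrib]
        refine Finset.sum_eq_zero fun x hx => ?_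
        have hxv : x ≠ v := fun h => hvσ (h ▸ hx)
        have hins : (insert v σ.1).erase x = insert v (σ.1.erase x) :=
          Finset.erase_insert_of_ne (fun h => hxv h.symm)
        have hcond2 : v ∉ σ.1.erase x ∧ insert v (σ.1.erase x) ∈ M.faces ∧
            ((insert v (σ.1.erase x)).card : ℤ) = k := by
          have hnm : v ∉ σ.1.erase x := fun h => hvσ (Finset.mem_of_mem_erase h)
          refine ⟨hnm, hv _ (M.down_closed σ.2.1 (Finset.erase_subset _ _)), ?_⟩
          rw [Finset.card_insert_of_notMem hnm]
          have hce := Finset.card_erase_add_one hx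
          have hk : (σ.1.card : ℤ) = k := σ.2.2
          push_cast
          omega
        have hcond1 : (insert v σ.1).erase x ∈ M.faces ∧
            (((insert v σ.1).erase x).card : ℤ) = k := by
          rw [hins]
          exact ⟨hcond2.2.1, hcond2.2.2⟩
        rw [dif_pos hcond1, dif_pos hcond2]
        have hface : (⟨(insert v σ.1).erase x, hcond1⟩ : Face M k)
            = ⟨insert v (σ.1.erase x), hcond2.2⟩ := Subtype.ext hins
        rw [hface, smul_smul, smul_smul]
        have hsgn : (-1:ℤ) ^ ((σ.1.filter (fun y => y < v)).card) *
              (-1:ℤ) ^ (((insert v σ.1).filter (fun y => y < x)).card)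
            = -((-1:ℤ) ^ ((σ.1.filter (fun y => y < x)).card) *
              (-1:ℤ) ^ (((σ.1.erase x).filter (fun y => y < v)).card)) := by
          have hvnotin : v ∉ σ.1.filter (fun y => y < x) :=
            fun h => hvσ (Finset.mem_filter.mp h).1
          have h2 := card_filter_erase σ.1 x v hx
          rcases (show x ≠ v from hxv).lt_or_gt with h | h
          · -- x < v
            have hfi : (insert v σ.1).filter (fun y => y < x) = σ.1.filter (fun y => y < x) := by
              rw [Finset.filter_insert, if_neg (not_lt.mpr h.le)]
            rw [if_pos h] at h2
            rw [hfi]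
            have e1 : (σ.1.filter (fun y => y < v)).card
                = ((σ.1.erase x).filter (fun y => y < v)).card + 1 := by omega
            rw [e1, pow_succ]
            ring
          · -- v < x
            have hfi : ((insert v σ.1).filter (fun y => y < x)).card
                = (σ.1.filter (fun y => y < x)).card + 1 := by
              rw [Finset.filter_insert, if_pos h, Finset.card_insert_of_notMem hvnotin]
            rw [if_neg (not_lt.mpr h.le)] at h2
            rw [hfi]
            have e2 : ((σ.1.erase x).filter (fun y => y < v)).card
                = (σ.1.filter (fun y => y < v)).card := by omega
            rw [e2, pow_succ]
            ring
        have hcoef : b * (-1:ℤ) ^ ((σ.1.filter (fun y => y < v)).card) *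
              ((-1:ℤ) ^ (((insert v σ.1).filter (fun y => y < x)).card))
            = -(b * (((-1:ℤ) ^ ((σ.1.filter (fun y => y < x)).card)) *
              ((-1:ℤ) ^ (((σ.1.erase x).filter (fun y => y < v)).card)))) := by
          rw [mul_assoc, hsgn]
          ring
        rw [hcoef, neg_smul, neg_add_cancel]
      rw [hcomb, add_zero]

end AuxConeIdent

section AuxStructural

variable {S : Finset ℕ} {K K1 K2 : SComplex S} {σ : Finset ℕ}

lemma IsFaceSum.sigma_sub (hK : IsFaceSum K K1 K2 σ) : σ ⊆ S := K1.faces_subset hK.mem1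

lemma IsFaceSum.mem_of_subset_sigma (hK : IsFaceSum K K1 K2 σ) {τ : Finset ℕ} (h : τ ⊆ σ) :
    τ ∈ K1.faces ∧ τ ∈ K2.faces := by
  have h2 : τ ∈ K1.faces ∩ K2.faces := by rw [hK.inter]; exact h
  exact h2

lemma IsFaceSum.subset_sigma_of_mem (hK : IsFaceSum K K1 K2 σ) {τ : Finset ℕ}
    (h1 : τ ∈ K1.faces) (h2 : τ ∈ K2.faces) : τ ⊆ σ := by
  have h3 : τ ∈ K1.faces ∩ K2.faces := ⟨h1, h2⟩
  rw [hK.inter] at h3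
  exact h3

lemma mem_restrict_iff {K : SComplex S} {J τ : Finset ℕ} :
    τ ∈ (K.restrict J).faces ↔ ∃ β ∈ K.faces, τ = β ∩ J := Iff.rfl

lemma restrict_subset_J {K : SComplex S} {J τ : Finset ℕ} (h : τ ∈ (K.restrict J).faces) :
    τ ⊆ J := by
  obtain ⟨β, hβ, rfl⟩ := h
  exact Finset.inter_subset_right

lemma mem_restrict_self {K : SComplex S} {J τ : Finset ℕ} (h : τ ∈ K.faces) (hτJ : τ ⊆ J) :
    τ ∈ (K.restrict J).faces := ⟨τ, h, (Finset.inter_eq_left.mpr hτJ).symm⟩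

lemma restrict_face_mem {K : SComplex S} {J τ : Finset ℕ} (h : τ ∈ (K.restrict J).faces) :
    τ ∈ K.faces := by
  obtain ⟨β, hβ, rfl⟩ := h
  exact K.down_closed hβ Finset.inter_subset_left

lemma IsFaceSum.restrict_cover (hK : IsFaceSum K K1 K2 σ) (J : Finset ℕ) :
    (K.restrict J).faces ⊆ (K1.restrict J).faces ∪ (K2.restrict J).faces := by
  rintro τ ⟨β, hβ, rfl⟩
  rw [hK.union] at hβ
  rcases hβ with h | h
  exacts [Or.inl ⟨β, h, rfl⟩, Or.inr ⟨β, h, rfl⟩]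

lemma IsFaceSum.restrict_inter (hK : IsFaceSum K K1 K2 σ) (J : Finset ℕ) {τ : Finset ℕ}
    (h1 : τ ∈ (K1.restrict J).faces) (h2 : τ ∈ (K2.restrict J).faces) : τ ⊆ σ ∩ J :=
  Finset.subset_inter (hK.subset_sigma_of_mem (restrict_face_mem h1) (restrict_face_mem h2))
    (restrict_subset_J h1)

lemma IsFaceSum.sub_sigma_restrict1 (hK : IsFaceSum K K1 K2 σ) (J : Finset ℕ) {τ : Finset ℕ}
    (h : τ ⊆ σ ∩ J) : τ ∈ (K1.restrict J).faces :=
  mem_restrict_self (hK.mem_of_subset_sigma (h.trans Finset.inter_subset_left)).1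
    (h.trans Finset.inter_subset_right)

lemma IsFaceSum.sub_sigma_restrict2 (hK : IsFaceSum K K1 K2 σ) (J : Finset ℕ) {τ : Finset ℕ}
    (h : τ ⊆ σ ∩ J) : τ ∈ (K2.restrict J).faces :=
  mem_restrict_self (hK.mem_of_subset_sigma (h.trans Finset.inter_subset_left)).2
    (h.trans Finset.inter_subset_right)

lemma mem_effVerts {K : SComplex S} {x : ℕ} :
    x ∈ effVerts K ↔ x ∈ S ∧ ({x} : Finset ℕ) ∈ K.faces := by
  classical
  simp [effVerts]

/-- The simplex `⟨V(K1) ∩ J⟩`. -/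
noncomputable def simpA' (K1 : SComplex S) (J : Finset ℕ) : SComplex S :=
  simplexOn (effVerts K1 ∩ J) (Finset.inter_subset_left.trans (effVerts_subset K1))

/-- The simplex `⟨σ ∩ J⟩`. -/
noncomputable def simpC (hK : IsFaceSum K K1 K2 σ) (J : Finset ℕ) : SComplex S :=
  simplexOn (σ ∩ J) ((Finset.inter_subset_left : σ ∩ J ⊆ σ).trans hK.sigma_sub)

lemma mem_simpA' {K1 : SComplex S} {J τ : Finset ℕ} :
    τ ∈ (simpA' K1 J).faces ↔ τ ⊆ effVerts K1 ∩ J := Iff.rfl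

lemma mem_simpC {hK : IsFaceSum K K1 K2 σ} {J τ : Finset ℕ} :
    τ ∈ (simpC hK J).faces ↔ τ ⊆ σ ∩ J := Iff.rfl

lemma A_sub_A' (K1 : SComplex S) (J : Finset ℕ) :
    (K1.restrict J).faces ⊆ (simpA' K1 J).faces := fun τ h =>
  Finset.subset_inter (face_subset_effVerts K1 (restrict_face_mem h)) (restrict_subset_J h)

lemma A'_sub_V (K1 K2 : SComplex S) (J : Finset ℕ) :
    (simpA' K1 J).faces ⊆ ((wedgeL K1 K2).restrict J).faces := fun τ hτ =>
  mem_restrict_self (Or.inl (hτ.trans Finset.inter_subset_left))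
    (hτ.trans Finset.inter_subset_right)

lemma B'_sub_V (K1 K2 : SComplex S) (J : Finset ℕ) :
    (simpA' K2 J).faces ⊆ ((wedgeL K1 K2).restrict J).faces := fun τ hτ =>
  mem_restrict_self (Or.inr (hτ.trans Finset.inter_subset_left))
    (hτ.trans Finset.inter_subset_right)

lemma V_cover (K1 K2 : SComplex S) (J : Finset ℕ) :
    ((wedgeL K1 K2).restrict J).faces ⊆ (simpA' K1 J).faces ∪ (simpA' K2 J).faces := by
  rintro τ ⟨β, hβ, rfl⟩
  rcases hβ with h | h
  · exact Or.inl (Finset.inter_subset_inter h (le_refl J))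
  · exact Or.inr (Finset.inter_subset_inter h (le_refl J))

lemma A'_inter (hK : IsFaceSum K K1 K2 σ) (J : Finset ℕ) {τ : Finset ℕ}
    (h1 : τ ∈ (simpA' K1 J).faces) (h2 : τ ∈ (simpA' K2 J).faces) :
    τ ∈ (simpC hK J).faces := by
  show τ ⊆ σ ∩ J
  intro x hx
  have hx1 := h1 hx
  have hx2 := h2 hx
  rw [Finset.mem_inter] at hx1 hx2 ⊢
  refine ⟨?_, hx1.2⟩
  have hv1 : ({x} : Finset ℕ) ∈ K1.faces := (mem_effVerts.mp hx1.1).2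
  have hv2 : ({x} : Finset ℕ) ∈ K2.faces := (mem_effVerts.mp hx2.1).2
  exact hK.subset_sigma_of_mem hv1 hv2 (Finset.mem_singleton_self x)

lemma C_sub_A (hK : IsFaceSum K K1 K2 σ) (J : Finset ℕ) :
    (simpC hK J).faces ⊆ (K1.restrict J).faces := fun _ h => hK.sub_sigma_restrict1 J h

lemma C_sub_B (hK : IsFaceSum K K1 K2 σ) (J : Finset ℕ) :
    (simpC hK J).faces ⊆ (K2.restrict J).faces := fun _ h => hK.sub_sigma_restrict2 J h

lemma C_sub_A' (hK : IsFaceSum K K1 K2 σ) (J : Finset ℕ) :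
    (simpC hK J).faces ⊆ (simpA' K1 J).faces := fun τ h =>
  h.trans (Finset.inter_subset_inter (face_subset_effVerts K1 hK.mem1) (le_refl J))

lemma C_sub_B' (hK : IsFaceSum K K1 K2 σ) (J : Finset ℕ) :
    (simpC hK J).faces ⊆ (simpA' K2 J).faces := fun τ h =>
  h.trans (Finset.inter_subset_inter (face_subset_effVerts K2 hK.mem2) (le_refl J))

lemma simplexOn_cone {t : Finset ℕ} {ht : t ⊆ S} {v : ℕ} (hv : v ∈ t) :
    ∀ α ∈ (simplexOn t ht).faces, insert v α ∈ (simplexOn t ht).faces :=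
  fun _ hα => Finset.insert_subset hv hα

lemma V_cone (hK : IsFaceSum K K1 K2 σ) (J : Finset ℕ) {v : ℕ} (hv : v ∈ σ ∩ J) :
    ∀ α ∈ ((wedgeL K1 K2).restrict J).faces,
      insert v α ∈ ((wedgeL K1 K2).restrict J).faces := by
  intro α hα
  have hvm := Finset.mem_inter.mp hv
  have hv1 : v ∈ effVerts K1 ∩ J :=
    Finset.mem_inter.mpr ⟨face_subset_effVerts K1 hK.mem1 hvm.1, hvm.2⟩
  have hv2 : v ∈ effVerts K2 ∩ J :=
    Finset.mem_inter.mpr ⟨face_subset_effVerts K2 hK.mem2 hvm.1, hvm.2⟩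
  rcases V_cover K1 K2 J hα with h | h
  · exact A'_sub_V K1 K2 J (Finset.insert_subset hv1 h)
  · exact B'_sub_V K1 K2 J (Finset.insert_subset hv2 h)

lemma vertex_cases (hK : IsFaceSum K K1 K2 σ) (hng : NoGhosts K) {J : Finset ℕ} (hJS : J ⊆ S)
    {x : ℕ} (hx : x ∈ J) : x ∈ effVerts K1 ∩ J ∨ x ∈ effVerts K2 ∩ J := by
  have hxS := hJS hx
  have hxK := hng x hxS
  rw [hK.union] at hxK
  rcases hxK with h | h
  · exact Or.inl (Finset.mem_inter.mpr ⟨mem_effVerts.mpr ⟨hxS, h⟩, hx⟩)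
  · exact Or.inr (Finset.mem_inter.mpr ⟨mem_effVerts.mpr ⟨hxS, h⟩, hx⟩)

end AuxStructural

section AuxQuot

variable {S : Finset ℕ}

lemma inducedRH_mk {K1 K2 : SComplex S} (h : K1.faces ⊆ K2.faces) (n : ℤ) (z : cycles K1 n) :
    inducedRH h n (QuotientAddGroup.mk z) = QuotientAddGroup.mk (cycleMap h n z) := rfl

lemma cycleMap_coe {K1 K2 : SComplex S} (h : K1.faces ⊆ K2.faces) (n : ℤ) (z : cycles K1 n) :
    (cycleMap h n z : Chains K2 (n+1)) = chainMap h (n+1) (z : Chains K1 (n+1)) := rfl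

lemma rh_eq_zero_iff {M : SComplex S} {n : ℤ} (z : cycles M n) :
    (QuotientAddGroup.mk z : RH M n) = 0 ↔
      ∃ c : Chains M (n+2), bdry M (n+2) (n+1) c = (z : Chains M (n+1)) := by
  rw [QuotientAddGroup.eq_zero_iff]
  exact Iff.rfl

lemma mk_add_mk {M : SComplex S} {n : ℤ} (z1 z2 : cycles M n) :
    (QuotientAddGroup.mk z1 + QuotientAddGroup.mk z2 : RH M n)
      = QuotientAddGroup.mk (z1 + z2) := rfl

lemma rh_eq_iff {M : SComplex S} {n : ℤ} (z1 z2 : cycles M n) :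
    (QuotientAddGroup.mk z1 : RH M n) = QuotientAddGroup.mk z2 ↔
      ∃ c : Chains M (n+2), bdry M (n+2) (n+1) c
        = (z1 : Chains M (n+1)) - (z2 : Chains M (n+1)) := by
  rw [QuotientAddGroup.eq]
  have h1 : (-z1 + z2 : cycles M n) ∈ boundariesIn M n ↔
      ∃ c : Chains M (n+2), bdry M (n+2) (n+1) c
        = ((-z1 + z2 : cycles M n) : Chains M (n+1)) := Iff.rfl
  rw [h1]
  constructor
  · rintro ⟨c, hc⟩
    refine ⟨-c, ?_⟩
    rw [map_neg, hc]
    push_cast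
    abel
  · rintro ⟨c, hc⟩
    refine ⟨-c, ?_⟩
    rw [map_neg, hc]
    push_cast
    abel

end AuxQuot

section AuxHelpers

variable {S : Finset ℕ}

lemma lift_to_inter {M A B C : SComplex S} (hA : A.faces ⊆ M.faces) (hB : B.faces ⊆ M.faces)
    (hCA : C.faces ⊆ A.faces) (hCB : C.faces ⊆ B.faces)
    (hint : ∀ τ : Finset ℕ, τ ∈ A.faces → τ ∈ B.faces → τ ∈ C.faces)
    (k : ℤ) (a : Chains A k) (b : Chains B k)
    (hab : chainMap hA k a = chainMap hB k b) :
    ∃ w : Chains C k, chainMap hCA k w = a ∧ chainMap hCB k w = b := by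
  have hs : ∀ σ' : Face A k, a σ' ≠ 0 → σ'.1 ∈ C.faces := by
    intro σ' h0
    refine hint _ σ'.2.1 ?_
    have h1 : chainMap hA k a ⟨σ'.1, hA σ'.2.1, σ'.2.2⟩ = a σ' :=
      chainMap_apply_mem hA k a _ σ'.2.1
    by_contra hB'
    rw [hab, chainMap_apply_not_mem hB k b _ hB'] at h1
    exact h0 h1.symm
  obtain ⟨w, hw⟩ := exists_chain_lift hCA k a hs
  refine ⟨w, hw, ?_⟩
  apply chainMap_injective hB k
  rw [chainMap_comp, ← hab, ← hw, chainMap_comp]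

lemma cone_cycle_bound {M : SComplex S} {v : ℕ} (hv : ∀ α ∈ M.faces, insert v α ∈ M.faces)
    (j k l : ℤ) (hj : j = k + 1) (hl : l = k - 1) (y : Chains M k)
    (hy : bdry M k l y = 0) : ∃ d : Chains M j, bdry M j k d = y := by
  refine ⟨cone M v k j y, ?_⟩
  have h := cone_ident M v hv j k l hj hl y
  rw [hy, map_zero, add_zero] at h
  exact h

open Classical in
lemma bdry_vertex {M : SComplex S} (j k : ℤ) (hj : j = 1) (hk : k = 0) {p : ℕ}
    (hmem : ({p} : Finset ℕ) ∈ M.faces) (hcard : ((({p} : Finset ℕ).card : ℤ)) = j) :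
    bdry M j k (Finsupp.single (⟨{p}, hmem, hcard⟩ : Face M j) 1)
      = Finsupp.single (⟨∅, M.empty_mem, by rw [hk]; simp⟩ : Face M k) 1 := by
  subst hj hk
  rw [bdry_single' M 1 0 {p} hmem hcard, Finset.sum_singleton]
  have hcond : ({p} : Finset ℕ).erase p ∈ M.faces ∧ (((({p} : Finset ℕ).erase p).card : ℤ)) = 0 := by
    rw [Finset.erase_singleton]
    exact ⟨M.empty_mem, by simp⟩
  rw [dif_pos hcond]
  have hface : (⟨({p} : Finset ℕ).erase p, hcond⟩ : Face M 0)
      = ⟨∅, M.empty_mem, by simp⟩ := Subtype.ext (Finset.erase_singleton p)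
  rw [hface]
  have hfil : ({p} : Finset ℕ).filter (fun y => y < p) = ∅ := by
    rw [Finset.filter_singleton, if_neg (lt_irrefl p)]
  rw [hfil]
  simp

end AuxHelpers

section AuxComp

variable {S : Finset ℕ} {K K1 K2 : SComplex S} {σ : Finset ℕ}

lemma comp_inj (hK : IsFaceSum K K1 K2 σ) (J : Finset ℕ) (n : ℤ) (hn : 1 ≤ n)
    (a : RH (K1.restrict J) (n-1)) (b : RH (K2.restrict J) (n-1))
    (hab : inducedRH (restrict_mono hK.le1 J) (n-1) a
         + inducedRH (restrict_mono hK.le2 J) (n-1) b = 0) :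
    a = 0 ∧ b = 0 := by
  obtain ⟨za, rfl⟩ := QuotientAddGroup.mk_surjective a
  obtain ⟨zb, rfl⟩ := QuotientAddGroup.mk_surjective b
  rw [inducedRH_mk, inducedRH_mk, mk_add_mk, rh_eq_zero_iff] at hab
  obtain ⟨c, hc⟩ := hab
  have hcoe : ((cycleMap (restrict_mono hK.le1 J) (n-1) za
      + cycleMap (restrict_mono hK.le2 J) (n-1) zb : cycles (K.restrict J) (n-1)) :
        Chains (K.restrict J) (n-1+1))
      = chainMap (restrict_mono hK.le1 J) (n-1+1) ↑za
        + chainMap (restrict_mono hK.le2 J) (n-1+1) ↑zb := rfl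
  rw [hcoe] at hc
  obtain ⟨c1, c2, hdec⟩ := exists_decomp (restrict_mono hK.le1 J) (restrict_mono hK.le2 J)
    (hK.restrict_cover J) (n-1+2) c
  have heq : chainMap (restrict_mono hK.le1 J) (n-1+1)
        (bdry (K1.restrict J) (n-1+2) (n-1+1) c1 - ↑za)
      = chainMap (restrict_mono hK.le2 J) (n-1+1)
        ((↑zb : Chains (K2.restrict J) (n-1+1)) - bdry (K2.restrict J) (n-1+2) (n-1+1) c2) := by
    rw [map_sub, map_sub, ← bdry_chainMap, ← bdry_chainMap, sub_eq_sub_iff_add_eq_add]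
    have h3 : bdry (K.restrict J) (n-1+2) (n-1+1) (chainMap (restrict_mono hK.le1 J) (n-1+2) c1)
        + bdry (K.restrict J) (n-1+2) (n-1+1) (chainMap (restrict_mono hK.le2 J) (n-1+2) c2)
        = chainMap (restrict_mono hK.le1 J) (n-1+1) ↑za
          + chainMap (restrict_mono hK.le2 J) (n-1+1) ↑zb := by
      rw [← map_add, hdec, hc]
    exact h3.trans (add_comm _ _)
  obtain ⟨w, hwA, hwB⟩ := lift_to_inter (restrict_mono hK.le1 J) (restrict_mono hK.le2 J)
    (C_sub_A hK J) (C_sub_B hK J) (fun τ h1 h2 => hK.restrict_inter J h1 h2) (n-1+1) _ _ heq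
  have h0 : chainMap (C_sub_A hK J) (n-1) (bdry (simpC hK J) (n-1+1) (n-1) w) = 0 := by
    rw [← bdry_chainMap, hwA, map_sub, bdry_bdry, AddMonoidHom.mem_ker.mp za.2, sub_zero]
  have hwcyc : bdry (simpC hK J) (n-1+1) (n-1) w = 0 :=
    chainMap_injective (C_sub_A hK J) (n-1) (h0.trans (map_zero _).symm)
  by_cases hs : (σ ∩ J).Nonempty
  · obtain ⟨v, hv⟩ := hs
    obtain ⟨u, hu⟩ := cone_cycle_bound
      (M := simpC hK J) (v := v) (fun α hα => Finset.insert_subset hv hα)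
      (n-1+2) (n-1+1) (n-1) (by ring) (by ring) w hwcyc
    constructor
    · rw [rh_eq_zero_iff]
      refine ⟨c1 - chainMap (C_sub_A hK J) (n-1+2) u, ?_⟩
      rw [map_sub, bdry_chainMap, hu, hwA]
      abel
    · rw [rh_eq_zero_iff]
      refine ⟨c2 + chainMap (C_sub_B hK J) (n-1+2) u, ?_⟩
      rw [map_add, bdry_chainMap, hu, hwB]
      abel
  · have hsE : σ ∩ J = ∅ := Finset.not_nonempty_iff_eq_empty.mp hs
    have hw0 : w = 0 := by
      refine chains_eq_zero (fun τ hτ => ?_) w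
      have hsub : τ ⊆ σ ∩ J := hτ
      rw [hsE, Finset.subset_empty] at hsub
      subst hsub
      simp only [Finset.card_empty, Nat.cast_zero]
      omega
    rw [hw0, map_zero] at hwA hwB
    constructor
    · rw [rh_eq_zero_iff]
      exact ⟨c1, sub_eq_zero.mp hwA.symm⟩
    · rw [rh_eq_zero_iff]
      refine ⟨c2, ?_⟩
      have := sub_eq_zero.mp hwB.symm
      exact this.symm
  done

lemma comp_gf1 (hK : IsFaceSum K K1 K2 σ) (J : Finset ℕ) (n : ℤ) (hn : 1 ≤ n)
    (a : RH (K1.restrict J) (n-1)) :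
    inducedRH (restrict_mono (le_wedgeL hK) J) (n-1)
      (inducedRH (restrict_mono hK.le1 J) (n-1) a) = 0 := by
  obtain ⟨za, rfl⟩ := QuotientAddGroup.mk_surjective a
  rw [inducedRH_mk, inducedRH_mk, rh_eq_zero_iff]
  by_cases hρ : (effVerts K1 ∩ J).Nonempty
  · obtain ⟨p, hp⟩ := hρ
    have hcyc : bdry (simpA' K1 J) (n-1+1) (n-1)
        (chainMap (A_sub_A' K1 J) (n-1+1) ↑za) = 0 := by
      rw [bdry_chainMap, AddMonoidHom.mem_ker.mp za.2, map_zero]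
    obtain ⟨d, hd⟩ := cone_cycle_bound
      (M := simpA' K1 J) (v := p) (fun α hα => Finset.insert_subset hp hα)
      (n-1+2) (n-1+1) (n-1) (by ring) (by ring) _ hcyc
    refine ⟨chainMap (A'_sub_V K1 K2 J) (n-1+2) d, ?_⟩
    have hR : ((cycleMap (restrict_mono (le_wedgeL hK) J) (n-1)
        (cycleMap (restrict_mono hK.le1 J) (n-1) za) : cycles ((wedgeL K1 K2).restrict J) (n-1)) :
          Chains ((wedgeL K1 K2).restrict J) (n-1+1))
        = chainMap ((A_sub_A' K1 J).trans (A'_sub_V K1 K2 J)) (n-1+1) ↑za := by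
      rw [cycleMap_coe, cycleMap_coe, chainMap_comp]
    rw [hR, bdry_chainMap, hd, chainMap_comp]
  · have hz : (↑za : Chains (K1.restrict J) (n-1+1)) = 0 := by
      refine chains_eq_zero (fun τ hτ => ?_) _
      have hsub : τ ⊆ effVerts K1 ∩ J := A_sub_A' K1 J hτ
      rw [Finset.not_nonempty_iff_eq_empty.mp hρ, Finset.subset_empty] at hsub
      subst hsub
      simp only [Finset.card_empty, Nat.cast_zero]
      omega
    refine ⟨0, ?_⟩
    rw [map_zero, cycleMap_coe, cycleMap_coe, hz, map_zero, map_zero]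

lemma comp_gf2 (hK : IsFaceSum K K1 K2 σ) (J : Finset ℕ) (n : ℤ) (hn : 1 ≤ n)
    (b : RH (K2.restrict J) (n-1)) :
    inducedRH (restrict_mono (le_wedgeL hK) J) (n-1)
      (inducedRH (restrict_mono hK.le2 J) (n-1) b) = 0 := by
  obtain ⟨zb, rfl⟩ := QuotientAddGroup.mk_surjective b
  rw [inducedRH_mk, inducedRH_mk, rh_eq_zero_iff]
  by_cases hρ : (effVerts K2 ∩ J).Nonempty
  · obtain ⟨p, hp⟩ := hρ
    have hcyc : bdry (simpA' K2 J) (n-1+1) (n-1)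
        (chainMap (A_sub_A' K2 J) (n-1+1) ↑zb) = 0 := by
      rw [bdry_chainMap, AddMonoidHom.mem_ker.mp zb.2, map_zero]
    obtain ⟨d, hd⟩ := cone_cycle_bound
      (M := simpA' K2 J) (v := p) (fun α hα => Finset.insert_subset hp hα)
      (n-1+2) (n-1+1) (n-1) (by ring) (by ring) _ hcyc
    refine ⟨chainMap (B'_sub_V K1 K2 J) (n-1+2) d, ?_⟩
    have hR : ((cycleMap (restrict_mono (le_wedgeL hK) J) (n-1)
        (cycleMap (restrict_mono hK.le2 J) (n-1) zb) : cycles ((wedgeL K1 K2).restrict J) (n-1)) :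
          Chains ((wedgeL K1 K2).restrict J) (n-1+1))
        = chainMap ((A_sub_A' K2 J).trans (B'_sub_V K1 K2 J)) (n-1+1) ↑zb := by
      rw [cycleMap_coe, cycleMap_coe, chainMap_comp]
    rw [hR, bdry_chainMap, hd, chainMap_comp]
  · have hz : (↑zb : Chains (K2.restrict J) (n-1+1)) = 0 := by
      refine chains_eq_zero (fun τ hτ => ?_) _
      have hsub : τ ⊆ effVerts K2 ∩ J := A_sub_A' K2 J hτ
      rw [Finset.not_nonempty_iff_eq_empty.mp hρ, Finset.subset_empty] at hsub
      subst hsub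
      simp only [Finset.card_empty, Nat.cast_zero]
      omega
    refine ⟨0, ?_⟩
    rw [map_zero, cycleMap_coe, cycleMap_coe, hz, map_zero, map_zero]

end AuxComp

section AuxCompExact

variable {S : Finset ℕ} {K K1 K2 : SComplex S} {σ : Finset ℕ}

lemma comp_exact (hK : IsFaceSum K K1 K2 σ) (J : Finset ℕ) (n : ℤ) (hn : 1 ≤ n)
    (u : RH (K.restrict J) (n-1))
    (hu : inducedRH (restrict_mono (le_wedgeL hK) J) (n-1) u = 0) :
    ∃ (a : RH (K1.restrict J) (n-1)) (b : RH (K2.restrict J) (n-1)),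
      inducedRH (restrict_mono hK.le1 J) (n-1) a
        + inducedRH (restrict_mono hK.le2 J) (n-1) b = u := by
  obtain ⟨zu, rfl⟩ := QuotientAddGroup.mk_surjective u
  obtain ⟨z1, z2, hdec⟩ := exists_decomp (restrict_mono hK.le1 J) (restrict_mono hK.le2 J)
    (hK.restrict_cover J) (n-1+1) ↑zu
  have hzu : bdry (K.restrict J) (n-1+1) (n-1) ↑zu = 0 := AddMonoidHom.mem_ker.mp zu.2
  have heq : chainMap (restrict_mono hK.le1 J) (n-1) (bdry (K1.restrict J) (n-1+1) (n-1) z1)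
      = chainMap (restrict_mono hK.le2 J) (n-1) (- bdry (K2.restrict J) (n-1+1) (n-1) z2) := by
    rw [map_neg, ← bdry_chainMap, ← bdry_chainMap, eq_neg_iff_add_eq_zero, ← map_add, hdec]
    exact hzu
  obtain ⟨w, hwA, hwB⟩ := lift_to_inter (restrict_mono hK.le1 J) (restrict_mono hK.le2 J)
    (C_sub_A hK J) (C_sub_B hK J) (fun τ h1 h2 => hK.restrict_inter J h1 h2) (n-1) _ _ heq
  by_cases hs : (σ ∩ J).Nonempty
  · obtain ⟨v, hv⟩ := hs
    have h0 : chainMap (C_sub_A hK J) (n-1-1) (bdry (simpC hK J) (n-1) (n-1-1) w) = 0 := by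
      rw [← bdry_chainMap, hwA, bdry_bdry]
    have hw0 : bdry (simpC hK J) (n-1) (n-1-1) w = 0 :=
      chainMap_injective (C_sub_A hK J) (n-1-1) (h0.trans (map_zero _).symm)
    obtain ⟨r, hr⟩ := cone_cycle_bound
      (M := simpC hK J) (v := v) (fun α hα => Finset.insert_subset hv hα)
      (n-1+1) (n-1) (n-1-1) (by ring) (by ring) w hw0
    have hzacyc : bdry (K1.restrict J) (n-1+1) (n-1)
        (z1 - chainMap (C_sub_A hK J) (n-1+1) r) = 0 := by
      rw [map_sub, bdry_chainMap, hr, hwA, sub_self]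
    have hzbcyc : bdry (K2.restrict J) (n-1+1) (n-1)
        (z2 + chainMap (C_sub_B hK J) (n-1+1) r) = 0 := by
      rw [map_add, bdry_chainMap, hr, hwB]
      abel
    refine ⟨QuotientAddGroup.mk ⟨z1 - chainMap (C_sub_A hK J) (n-1+1) r, hzacyc⟩,
            QuotientAddGroup.mk ⟨z2 + chainMap (C_sub_B hK J) (n-1+1) r, hzbcyc⟩, ?_⟩
    rw [inducedRH_mk, inducedRH_mk, mk_add_mk]
    congr 1
    apply Subtype.ext
    show chainMap (restrict_mono hK.le1 J) (n-1+1) (z1 - chainMap (C_sub_A hK J) (n-1+1) r)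
        + chainMap (restrict_mono hK.le2 J) (n-1+1) (z2 + chainMap (C_sub_B hK J) (n-1+1) r)
        = (↑zu : Chains (K.restrict J) (n-1+1))
    rw [map_sub, map_add, chainMap_comp, chainMap_comp, ← hdec]
    have ht : chainMap ((C_sub_A hK J).trans (restrict_mono hK.le1 J)) (n-1+1) r
        = chainMap ((C_sub_B hK J).trans (restrict_mono hK.le2 J)) (n-1+1) r := rfl
    rw [ht]
    abel
  · rw [inducedRH_mk, rh_eq_zero_iff] at hu
    obtain ⟨e, he⟩ := hu
    obtain ⟨e1, e2, hedec⟩ := exists_decomp (A'_sub_V K1 K2 J) (B'_sub_V K1 K2 J)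
      (V_cover K1 K2 J) (n-1+2) e
    have hXeq : chainMap (A'_sub_V K1 K2 J) (n-1+1)
        (bdry (simpA' K1 J) (n-1+2) (n-1+1) e1 - chainMap (A_sub_A' K1 J) (n-1+1) z1)
        = chainMap (B'_sub_V K1 K2 J) (n-1+1)
        (chainMap (A_sub_A' K2 J) (n-1+1) z2 - bdry (simpA' K2 J) (n-1+2) (n-1+1) e2) := by
      rw [map_sub, map_sub, ← bdry_chainMap, ← bdry_chainMap, chainMap_comp, chainMap_comp,
        sub_eq_sub_iff_add_eq_add]
      rw [← map_add, hedec, he]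
      have hcc : ((cycleMap (restrict_mono (le_wedgeL hK) J) (n-1) zu :
          cycles ((wedgeL K1 K2).restrict J) (n-1)) : Chains ((wedgeL K1 K2).restrict J) (n-1+1))
          = chainMap (restrict_mono (le_wedgeL hK) J) (n-1+1) ↑zu := rfl
      rw [hcc, ← hdec, map_add, chainMap_comp, chainMap_comp]
      exact add_comm _ _
    obtain ⟨wx, hwx1, hwx2⟩ := lift_to_inter (A'_sub_V K1 K2 J) (B'_sub_V K1 K2 J)
      (C_sub_A' hK J) (C_sub_B' hK J) (fun τ h1 h2 => A'_inter hK J h1 h2) (n-1+1) _ _ hXeq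
    have hsE : σ ∩ J = ∅ := Finset.not_nonempty_iff_eq_empty.mp hs
    have hwx0 : wx = 0 := by
      refine chains_eq_zero (fun τ hτ => ?_) wx
      have hsub : τ ⊆ σ ∩ J := hτ
      rw [hsE, Finset.subset_empty] at hsub
      subst hsub
      simp only [Finset.card_empty, Nat.cast_zero]
      omega
    rw [hwx0, map_zero] at hwx1 hwx2
    have hz1b : bdry (simpA' K1 J) (n-1+2) (n-1+1) e1 = chainMap (A_sub_A' K1 J) (n-1+1) z1 :=
      sub_eq_zero.mp hwx1.symm
    have hz2b : chainMap (A_sub_A' K2 J) (n-1+1) z2 = bdry (simpA' K2 J) (n-1+2) (n-1+1) e2 :=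
      sub_eq_zero.mp hwx2.symm
    have hz1cyc : bdry (K1.restrict J) (n-1+1) (n-1) z1 = 0 := by
      refine chainMap_injective (A_sub_A' K1 J) (n-1) ?_
      rw [← bdry_chainMap, ← hz1b, bdry_bdry, map_zero]
    have hz2cyc : bdry (K2.restrict J) (n-1+1) (n-1) z2 = 0 := by
      refine chainMap_injective (A_sub_A' K2 J) (n-1) ?_
      rw [← bdry_chainMap, hz2b, bdry_bdry, map_zero]
    refine ⟨QuotientAddGroup.mk ⟨z1, hz1cyc⟩, QuotientAddGroup.mk ⟨z2, hz2cyc⟩, ?_⟩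
    rw [inducedRH_mk, inducedRH_mk, mk_add_mk]
    congr 1
    exact Subtype.ext hdec

end AuxCompExact

section AuxCompSurj

variable {S : Finset ℕ} {K K1 K2 : SComplex S} {σ : Finset ℕ}

lemma single_face_congr {M : SComplex S} {k : ℤ} (f1 f2 : Face M k) (h : f1.1 = f2.1) (b : ℤ) :
    Finsupp.single f1 b = Finsupp.single f2 b :=
  congrArg (fun f => Finsupp.single f b) (Subtype.ext h)

lemma comp_surj (hK : IsFaceSum K K1 K2 σ) (hng : NoGhosts K) {J : Finset ℕ}
    (hJS : J ⊆ S) (hJne : J.Nonempty) (n : ℤ) (hn : 1 ≤ n)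
    (y : RH ((wedgeL K1 K2).restrict J) (n-1)) :
    ∃ u : RH (K.restrict J) (n-1),
      inducedRH (restrict_mono (le_wedgeL hK) J) (n-1) u = y := by
  obtain ⟨zy, rfl⟩ := QuotientAddGroup.mk_surjective y
  by_cases hs : (σ ∩ J).Nonempty
  · obtain ⟨v, hv⟩ := hs
    obtain ⟨d, hd⟩ := cone_cycle_bound (V_cone hK J hv) (n-1+2) (n-1+1) (n-1)
      (by ring) (by ring) ↑zy (AddMonoidHom.mem_ker.mp zy.2)
    refine ⟨0, ?_⟩
    rw [map_zero, eq_comm, rh_eq_zero_iff]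
    exact ⟨d, hd⟩
  · have hsE : σ ∩ J = ∅ := Finset.not_nonempty_iff_eq_empty.mp hs
    obtain ⟨y1, y2, hydec⟩ := exists_decomp (A'_sub_V K1 K2 J) (B'_sub_V K1 K2 J)
      (V_cover K1 K2 J) (n-1+1) ↑zy
    have heq : chainMap (A'_sub_V K1 K2 J) (n-1) (bdry (simpA' K1 J) (n-1+1) (n-1) y1)
        = chainMap (B'_sub_V K1 K2 J) (n-1) (- bdry (simpA' K2 J) (n-1+1) (n-1) y2) := by
      rw [map_neg, ← bdry_chainMap, ← bdry_chainMap, eq_neg_iff_add_eq_zero, ← map_add, hydec]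
      exact AddMonoidHom.mem_ker.mp zy.2
    obtain ⟨w, hw1, hw2⟩ := lift_to_inter (A'_sub_V K1 K2 J) (B'_sub_V K1 K2 J)
      (C_sub_A' hK J) (C_sub_B' hK J) (fun τ h1 h2 => A'_inter hK J h1 h2) (n-1) _ _ heq
    by_cases hρ : (effVerts K1 ∩ J).Nonempty
    · by_cases hτ2 : (effVerts K2 ∩ J).Nonempty
      · obtain ⟨p, hp⟩ := hρ
        obtain ⟨q, hq⟩ := hτ2
        by_cases hn1 : n = 1
        · subst hn1
          have hf0c : (((∅ : Finset ℕ).card : ℤ)) = 1-1 := by simp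
          have hf0 : (∅ : Finset ℕ) ∈ (simpC hK J).faces := (simpC hK J).empty_mem
          set lam : ℤ := w ⟨∅, hf0, hf0c⟩ with hlam
          have hw_single : w = Finsupp.single (⟨∅, hf0, hf0c⟩ : Face (simpC hK J) (1-1)) lam := by
            ext τf
            have hτ0 : τf.1 = ∅ := by
              have hsub : τf.1 ⊆ σ ∩ J := τf.2.1
              rw [hsE, Finset.subset_empty] at hsub
              exact hsub
            have hτf : τf = ⟨∅, hf0, hf0c⟩ := Subtype.ext hτ0
            rw [hτf, Finsupp.single_eq_same]
          have hpJ := Finset.mem_inter.mp hp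
          have hqJ := Finset.mem_inter.mp hq
          have hpK1 : ({p} : Finset ℕ) ∈ K1.faces := (mem_effVerts.mp hpJ.1).2
          have hqK2 : ({q} : Finset ℕ) ∈ K2.faces := (mem_effVerts.mp hqJ.1).2
          have hpU : ({p} : Finset ℕ) ∈ (K.restrict J).faces :=
            mem_restrict_self (hK.le1 hpK1) (Finset.singleton_subset_iff.mpr hpJ.2)
          have hqU : ({q} : Finset ℕ) ∈ (K.restrict J).faces :=
            mem_restrict_self (hK.le2 hqK2) (Finset.singleton_subset_iff.mpr hqJ.2)
          have hpA' : ({p} : Finset ℕ) ∈ (simpA' K1 J).faces :=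
            Finset.singleton_subset_iff.mpr hp
          have hqB' : ({q} : Finset ℕ) ∈ (simpA' K2 J).faces :=
            Finset.singleton_subset_iff.mpr hq
          have hcp : ((({p} : Finset ℕ).card : ℤ)) = 1-1+1 := by simp
          have hcq : ((({q} : Finset ℕ).card : ℤ)) = 1-1+1 := by simp
          set uch : Chains (K.restrict J) (1-1+1) :=
            lam • (Finsupp.single (⟨{p}, hpU, hcp⟩ : Face (K.restrict J) (1-1+1)) 1
              - Finsupp.single (⟨{q}, hqU, hcq⟩ : Face (K.restrict J) (1-1+1)) 1) with huch
          have hucyc : bdry (K.restrict J) (1-1+1) (1-1) uch = 0 := by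
            rw [huch, map_zsmul, map_sub,
              bdry_vertex (1-1+1) (1-1) (by norm_num) (by norm_num) hpU hcp,
              bdry_vertex (1-1+1) (1-1) (by norm_num) (by norm_num) hqU hcq]
            simp
          refine ⟨QuotientAddGroup.mk ⟨uch, hucyc⟩, ?_⟩
          rw [inducedRH_mk, rh_eq_iff]
          set zA : Chains (simpA' K1 J) (1-1+1) :=
            lam • Finsupp.single (⟨{p}, hpA', hcp⟩ : Face (simpA' K1 J) (1-1+1)) 1 - y1 with hzA
          set zB : Chains (simpA' K2 J) (1-1+1) :=
            - (lam • Finsupp.single (⟨{q}, hqB', hcq⟩ : Face (simpA' K2 J) (1-1+1)) 1) - y2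
            with hzB
          have hbdy1 : bdry (simpA' K1 J) (1-1+1) (1-1) y1
              = Finsupp.single (⟨∅, (simpA' K1 J).empty_mem, hf0c⟩ : Face (simpA' K1 J) (1-1))
                  lam := by
            rw [← hw1, hw_single, chainMap_single]
          have hbdy2 : bdry (simpA' K2 J) (1-1+1) (1-1) y2
              = - Finsupp.single (⟨∅, (simpA' K2 J).empty_mem, hf0c⟩ : Face (simpA' K2 J) (1-1))
                  lam := by
            have h2 : bdry (simpA' K2 J) (1-1+1) (1-1) y2
                = - chainMap (C_sub_B' hK J) (1-1) w := by
              rw [hw2, neg_neg]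
            rw [hw_single, chainMap_single] at h2
            rw [h2]
          have hzAc : bdry (simpA' K1 J) (1-1+1) (1-1) zA = 0 := by
            rw [hzA, map_sub, map_zsmul,
              bdry_vertex (1-1+1) (1-1) (by norm_num) (by norm_num) hpA' hcp, hbdy1,
              Finsupp.smul_single, smul_eq_mul, mul_one]
            simp
          have hzBc : bdry (simpA' K2 J) (1-1+1) (1-1) zB = 0 := by
            rw [hzB, map_sub, map_neg, map_zsmul,
              bdry_vertex (1-1+1) (1-1) (by norm_num) (by norm_num) hqB' hcq, hbdy2,
              Finsupp.smul_single, smul_eq_mul, mul_one]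
            simp
          obtain ⟨dA, hdA⟩ := cone_cycle_bound (M := simpA' K1 J) (v := p)
            (fun α hα => Finset.insert_subset hp hα) (1-1+2) (1-1+1) (1-1)
            (by ring) (by ring) zA hzAc
          obtain ⟨dB, hdB⟩ := cone_cycle_bound (M := simpA' K2 J) (v := q)
            (fun α hα => Finset.insert_subset hq hα) (1-1+2) (1-1+1) (1-1)
            (by ring) (by ring) zB hzBc
          refine ⟨chainMap (A'_sub_V K1 K2 J) (1-1+2) dA
            + chainMap (B'_sub_V K1 K2 J) (1-1+2) dB, ?_⟩
          rw [map_add, bdry_chainMap, bdry_chainMap, hdA, hdB]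
          have hcoe : ((cycleMap (restrict_mono (le_wedgeL hK) J) (1-1) ⟨uch, hucyc⟩ :
              cycles ((wedgeL K1 K2).restrict J) (1-1)) :
                Chains ((wedgeL K1 K2).restrict J) (1-1+1))
              = chainMap (restrict_mono (le_wedgeL hK) J) (1-1+1) uch := rfl
          have eA : chainMap (A'_sub_V K1 K2 J) (1-1+1) zA
              = lam • Finsupp.single
                  (⟨{p}, A'_sub_V K1 K2 J hpA', hcp⟩ :
                    Face ((wedgeL K1 K2).restrict J) (1-1+1)) 1
                - chainMap (A'_sub_V K1 K2 J) (1-1+1) y1 := by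
            rw [hzA, map_sub, map_zsmul, chainMap_single]
          have eB : chainMap (B'_sub_V K1 K2 J) (1-1+1) zB
              = - (lam • Finsupp.single
                  (⟨{q}, B'_sub_V K1 K2 J hqB', hcq⟩ :
                    Face ((wedgeL K1 K2).restrict J) (1-1+1)) 1)
                - chainMap (B'_sub_V K1 K2 J) (1-1+1) y2 := by
            rw [hzB, map_sub, map_neg, map_zsmul, chainMap_single]
          have eU : chainMap (restrict_mono (le_wedgeL hK) J) (1-1+1) uch
              = lam • (Finsupp.single
                  (⟨{p}, A'_sub_V K1 K2 J hpA', hcp⟩ :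
                    Face ((wedgeL K1 K2).restrict J) (1-1+1)) 1
                - Finsupp.single
                  (⟨{q}, B'_sub_V K1 K2 J hqB', hcq⟩ :
                    Face ((wedgeL K1 K2).restrict J) (1-1+1)) 1) := by
            rw [huch, map_zsmul, map_sub, chainMap_single, chainMap_single]
          rw [eA, eB, hcoe, eU, ← hydec, smul_sub]
          abel
        · have hw0 : w = 0 := by
            refine chains_eq_zero (fun τ hτ => ?_) w
            have hsub : τ ⊆ σ ∩ J := hτ
            rw [hsE, Finset.subset_empty] at hsub
            subst hsub
            simp only [Finset.card_empty, Nat.cast_zero]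
            omega
          rw [hw0, map_zero] at hw1 hw2
          have hy1c : bdry (simpA' K1 J) (n-1+1) (n-1) y1 = 0 := hw1.symm
          have hy2c : bdry (simpA' K2 J) (n-1+1) (n-1) y2 = 0 := by
            have h2 := hw2.symm
            rwa [neg_eq_zero] at h2
          obtain ⟨d1, hd1⟩ := cone_cycle_bound (M := simpA' K1 J) (v := p)
            (fun α hα => Finset.insert_subset hp hα) (n-1+2) (n-1+1) (n-1)
            (by ring) (by ring) y1 hy1c
          obtain ⟨d2, hd2⟩ := cone_cycle_bound (M := simpA' K2 J) (v := q)
            (fun α hα => Finset.insert_subset hq hα) (n-1+2) (n-1+1) (n-1)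
            (by ring) (by ring) y2 hy2c
          refine ⟨0, ?_⟩
          rw [map_zero, eq_comm, rh_eq_zero_iff]
          refine ⟨chainMap (A'_sub_V K1 K2 J) (n-1+2) d1
            + chainMap (B'_sub_V K1 K2 J) (n-1+2) d2, ?_⟩
          rw [map_add, bdry_chainMap, bdry_chainMap, hd1, hd2, hydec]
      · have hy2z : y2 = 0 := by
          refine chains_eq_zero (fun τ hτ => ?_) y2
          have hsub : τ ⊆ effVerts K2 ∩ J := hτ
          rw [Finset.not_nonempty_iff_eq_empty.mp hτ2, Finset.subset_empty] at hsub
          subst hsub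
          simp only [Finset.card_empty, Nat.cast_zero]
          omega
        obtain ⟨p, hp⟩ := hρ
        have hy1V : chainMap (A'_sub_V K1 K2 J) (n-1+1) y1 = ↑zy := by
          rw [← hydec, hy2z, map_zero, add_zero]
        have hy1c : bdry (simpA' K1 J) (n-1+1) (n-1) y1 = 0 := by
          refine chainMap_injective (A'_sub_V K1 K2 J) (n-1) ?_
          rw [← bdry_chainMap, hy1V, map_zero]
          exact AddMonoidHom.mem_ker.mp zy.2
        obtain ⟨d1, hd1⟩ := cone_cycle_bound (M := simpA' K1 J) (v := p)
          (fun α hα => Finset.insert_subset hp hα) (n-1+2) (n-1+1) (n-1)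
          (by ring) (by ring) y1 hy1c
        refine ⟨0, ?_⟩
        rw [map_zero, eq_comm, rh_eq_zero_iff]
        exact ⟨chainMap (A'_sub_V K1 K2 J) (n-1+2) d1, by rw [bdry_chainMap, hd1, hy1V]⟩
    · have hy1z : y1 = 0 := by
        refine chains_eq_zero (fun τ hτ => ?_) y1
        have hsub : τ ⊆ effVerts K1 ∩ J := hτ
        rw [Finset.not_nonempty_iff_eq_empty.mp hρ, Finset.subset_empty] at hsub
        subst hsub
        simp only [Finset.card_empty, Nat.cast_zero]
        omega
      obtain ⟨x, hx⟩ := hJne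
      have hq' : x ∈ effVerts K2 ∩ J := by
        rcases vertex_cases hK hng hJS hx with h | h
        · rw [Finset.not_nonempty_iff_eq_empty.mp hρ] at h
          exact absurd h (Finset.notMem_empty x)
        · exact h
      have hy2V : chainMap (B'_sub_V K1 K2 J) (n-1+1) y2 = ↑zy := by
        rw [← hydec, hy1z, map_zero, zero_add]
      have hy2c : bdry (simpA' K2 J) (n-1+1) (n-1) y2 = 0 := by
        refine chainMap_injective (B'_sub_V K1 K2 J) (n-1) ?_
        rw [← bdry_chainMap, hy2V, map_zero]
        exact AddMonoidHom.mem_ker.mp zy.2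
      obtain ⟨d2, hd2⟩ := cone_cycle_bound (M := simpA' K2 J) (v := x)
        (fun α hα => Finset.insert_subset hq' hα) (n-1+2) (n-1+1) (n-1)
        (by ring) (by ring) y2 hy2c
      refine ⟨0, ?_⟩
      rw [map_zero, eq_comm, rh_eq_zero_iff]
      exact ⟨chainMap (B'_sub_V K1 K2 J) (n-1+2) d2, by rw [bdry_chainMap, hd2, hy2V]⟩

end AuxCompSurj

section Assembly

variable {S : Finset ℕ}

lemma CHmap_of {K1 K2 : SComplex S} (h : K1.faces ⊆ K2.faces) (n l : ℤ) (J : Idx S l)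
    (x : RH (K1.restrict J.1) (n-1)) :
    CHmap h n l (DirectSum.of (fun J' : Idx S l => RH (K1.restrict J'.1) (n-1)) J x)
      = DirectSum.of (fun J' : Idx S l => RH (K2.restrict J'.1) (n-1)) J
          (inducedRH (restrict_mono h J.1) (n-1) x) := by
  rw [CHmap, DirectSum.toAddMonoid_of]
  rfl

lemma CHmap_apply {K1 K2 : SComplex S} (h : K1.faces ⊆ K2.faces) (n l : ℤ)
    (x : CH K1 n l) (J : Idx S l) :
    CHmap h n l x J = inducedRH (restrict_mono h J.1) (n-1) (x J) := by
  induction x using DirectSum.induction_on with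
  | zero => simp
  | of i a =>
    rw [CHmap_of]
    by_cases hij : i = J
    · subst hij
      rw [DirectSum.of_eq_same, DirectSum.of_eq_same]
    · rw [DirectSum.of_eq_of_ne _ _ _ (Ne.symm hij), DirectSum.of_eq_of_ne _ _ _ (Ne.symm hij), map_zero]
  | add x y hx hy =>
    rw [map_add, DirectSum.add_apply, DirectSum.add_apply, hx, hy, map_add]

end Assembly

/-- For a wedge-decomposable `K = K¹ ⊔_σ K²` on `[m]` with no
ghost vertices and `L = ⟨V(K¹)⟩ ⊔_σ ⟨V(K²)⟩`, for each `n ≥ 1` and each `l ≥ 1`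
the inclusion-induced maps give a short exact sequence
`0 → CH_n^l(Z_{K¹}) ⊕ CH_n^l(Z_{K²}) → CH_n^l(Z_K) → CH_n^l(Z_L) → 0`,
and both maps commute with the differentials `d`. -/
theorem ses_of_cochain_complexes (m : ℕ) (K K1 K2 : SComplex (Finset.Icc 1 m))
    (σ : Finset ℕ) (hK : IsFaceSum K K1 K2 σ) (hng : NoGhosts K)
    (n : ℤ) (hn : 1 ≤ n) (l : ℤ) (hl : 1 ≤ l) :
    Function.Injective ⇑((CHmap hK.le1 n l).coprod (CHmap hK.le2 n l)) ∧
    Function.Exact ⇑((CHmap hK.le1 n l).coprod (CHmap hK.le2 n l))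
      ⇑(CHmap (le_wedgeL hK) n l) ∧
    Function.Surjective ⇑(CHmap (le_wedgeL hK) n l) ∧
    (CHmap (le_wedgeL hK) n (l + 1)).comp (dCH K n l (l + 1)) =
      (dCH (wedgeL K1 K2) n l (l + 1)).comp (CHmap (le_wedgeL hK) n l) ∧
    ((CHmap hK.le1 n (l + 1)).coprod (CHmap hK.le2 n (l + 1))).comp
        ((dCH K1 n l (l + 1)).prodMap (dCH K2 n l (l + 1))) =
      (dCH K n l (l + 1)).comp ((CHmap hK.le1 n l).coprod (CHmap hK.le2 n l)) := by
  classical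
  have hJne : ∀ J : Idx (Finset.Icc 1 m) l, J.1.Nonempty := by
    intro J
    have h1 : (J.1.card : ℤ) = l := J.2.2
    rw [← Finset.card_pos]
    omega
  refine ⟨?_, ?_, ?_, CHmap_dCH (le_wedgeL hK) n l (l + 1), ?_⟩
  · rw [injective_iff_map_eq_zero]
    rintro ⟨a, b⟩ hab
    have hcomp : ∀ J : Idx (Finset.Icc 1 m) l, a J = 0 ∧ b J = 0 := by
      intro J
      have h1 := congrArg (fun z : CH K n l => z J) hab
      simp only [AddMonoidHom.coprod_apply, DirectSum.add_apply, DirectSum.zero_apply] at h1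
      rw [CHmap_apply, CHmap_apply] at h1
      exact comp_inj hK J.1 n hn (a J) (b J) h1
    have ha : a = 0 := DFinsupp.ext fun J => (hcomp J).1
    have hb : b = 0 := DFinsupp.ext fun J => (hcomp J).2
    rw [ha, hb]
    rfl
  · intro y
    constructor
    · intro hy
      have hcomp : ∀ J : Idx (Finset.Icc 1 m) l,
          inducedRH (restrict_mono (le_wedgeL hK) J.1) (n-1) (y J) = 0 := by
        intro J
        have h1 : CHmap (le_wedgeL hK) n l y J = (0 : CH (wedgeL K1 K2) n l) J := by
          rw [hy]
        rw [CHmap_apply] at h1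
        simpa using h1
      choose f1 f2 hf using fun J : Idx (Finset.Icc 1 m) l =>
        comp_exact hK J.1 n hn (y J) (hcomp J)
      refine ⟨(∑ J ∈ DFinsupp.support y, DirectSum.of _ J (f1 J),
               ∑ J ∈ DFinsupp.support y, DirectSum.of _ J (f2 J)), ?_⟩
      rw [AddMonoidHom.coprod_apply, map_sum, map_sum, ← Finset.sum_add_distrib]
      have hterm : ∀ J ∈ DFinsupp.support y,
          CHmap hK.le1 n l (DirectSum.of
              (fun J' : Idx (Finset.Icc 1 m) l => RH (K1.restrict J'.1) (n-1)) J (f1 J))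
            + CHmap hK.le2 n l (DirectSum.of
              (fun J' : Idx (Finset.Icc 1 m) l => RH (K2.restrict J'.1) (n-1)) J (f2 J))
          = DirectSum.of (fun J' : Idx (Finset.Icc 1 m) l => RH (K.restrict J'.1) (n-1))
              J (y J) := by
        intro J _
        rw [CHmap_of, CHmap_of, ← map_add, hf J]
      rw [Finset.sum_congr rfl hterm]
      exact DirectSum.sum_support_of y
    · rintro ⟨⟨a, b⟩, rfl⟩
      refine DFinsupp.ext fun J => ?_
      rw [CHmap_apply]
      have hco : (((CHmap hK.le1 n l).coprod (CHmap hK.le2 n l)) (a, b)) J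
          = inducedRH (restrict_mono hK.le1 J.1) (n-1) (a J)
            + inducedRH (restrict_mono hK.le2 J.1) (n-1) (b J) := by
        rw [AddMonoidHom.coprod_apply, DirectSum.add_apply, CHmap_apply, CHmap_apply]
      rw [hco, map_add, comp_gf1 hK J.1 n hn, comp_gf2 hK J.1 n hn, add_zero]
      simp
  · intro y
    induction y using DirectSum.induction_on with
    | zero => exact ⟨0, map_zero _⟩
    | of J x =>
      obtain ⟨u, hu⟩ := comp_surj hK hng J.2.1 (hJne J) n hn x
      exact ⟨DirectSum.of _ J u, by rw [CHmap_of, hu]⟩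
    | add x1 x2 h1 h2 =>
      obtain ⟨u1, hu1⟩ := h1
      obtain ⟨u2, hu2⟩ := h2
      exact ⟨u1 + u2, by rw [map_add, hu1, hu2]⟩
  · apply AddMonoidHom.ext
    rintro ⟨a, b⟩
    show CHmap hK.le1 n (l+1) (dCH K1 n l (l+1) a) + CHmap hK.le2 n (l+1) (dCH K2 n l (l+1) b)
      = dCH K n l (l+1) (CHmap hK.le1 n l a + CHmap hK.le2 n l b)
    have h1 := congrArg (fun f => f a) (CHmap_dCH hK.le1 n l (l+1))
    have h2 := congrArg (fun f => f b) (CHmap_dCH hK.le2 n l (l+1))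
    simp only [AddMonoidHom.comp_apply] at h1 h2
    rw [h1, h2, map_add]

end DH
end

section
/- Let ρ and τ be finite sets of vertices with ρ ∩ τ = σ, and let L = ⟨ρ⟩ ⊔_σ ⟨τ⟩ = ⟨ρ⟩ ∪ ⟨τ⟩ be the face sum of the two full simplices along σ. If J is a subset of ρ ∪ τ with J ∩ σ = ∅, J ∩ ρ ≠ ∅ and J ∩ τ ≠ ∅, then L_J has exactly two path components (namely ⟨ρ⟩_J and ⟨τ⟩_J), and H̃_0(L_J) is infinite cyclic, generated by the class [y] − [x] for any choice of vertices x ∈ J ∩ ρ and y ∈ J ∩ τ. -/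
set_option maxHeartbeats 1000000
set_option synthInstance.maxHeartbeats 1000000

open scoped DirectSum

namespace DH

variable {S : Finset ℕ}

/-- The face sum `L = ⟨ρ⟩ ⊔_{ρ∩τ} ⟨τ⟩ = ⟨ρ⟩ ∪ ⟨τ⟩` of two full simplices, as a
simplicial complex on `ρ ∪ τ`. -/
noncomputable def simplexWedge (ρ τ : Finset ℕ) : SComplex (ρ ∪ τ) :=
  (simplexOn ρ Finset.subset_union_left).union (simplexOn τ Finset.subset_union_right)

open Classical in
lemma bdry_single_vtx (K : SComplex S) (v : ℕ) (h : ({v} : Finset ℕ) ∈ K.faces)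
    (h1 : ((({v} : Finset ℕ).card : ℤ) = 0 + 1)) (n : ℤ) :
    bdry K (0+1) 0 (Finsupp.single (⟨{v}, h, h1⟩ : Face K (0+1)) n) =
      Finsupp.single (⟨∅, K.empty_mem, by simp⟩ : Face K 0) n := by
  rw [bdry, Finsupp.liftAddHom_apply_single, zmultiplesHom_apply]
  have he : (∅ : Finset ℕ) ∈ K.faces ∧ (((∅ : Finset ℕ).card : ℤ)) = 0 := ⟨K.empty_mem, by simp⟩
  rw [show ((⟨{v}, h, h1⟩ : Face K (0+1)) : Finset ℕ) = {v} from rfl]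
  rw [Finset.sum_singleton, Finset.erase_singleton, dif_pos he]
  have hfil : Finset.filter (fun y => y < v) ({v} : Finset ℕ) = ∅ := by
    rw [Finset.filter_singleton, if_neg (lt_irrefl v)]
  rw [hfil]
  simp only [Finset.card_empty, pow_zero, one_zsmul, Finsupp.smul_single, smul_eq_mul, mul_one]

/-- augmentation -/
noncomputable def aug (K : SComplex S) : Chains K (0+1) →+ ℤ :=
  Finsupp.liftAddHom fun _ => AddMonoidHom.id ℤ

lemma aug_single (K : SComplex S) (f : Face K (0+1)) (n : ℤ) :
    aug K (Finsupp.single f n) = n := by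
  rw [aug, Finsupp.liftAddHom_apply_single]; rfl

lemma face1_eq_singleton {K : SComplex S} (f : Face K (0+1)) : ∃ v, f.1 = {v} := by
  have : f.1.card = 1 := by
    have := f.2.2
    omega
  exact Finset.card_eq_one.mp this

lemma bdry_eq_aug (K : SComplex S) (z : Chains K (0+1)) :
    bdry K (0+1) 0 z = Finsupp.single (⟨∅, K.empty_mem, by simp⟩ : Face K 0) (aug K z) := by
  induction z using Finsupp.induction_linear with
  | zero => simp
  | add f g hf hg => rw [map_add, hf, hg, map_add, Finsupp.single_add]
  | single f n =>
    obtain ⟨v, hv⟩ := face1_eq_singleton f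
    have hm : ({v} : Finset ℕ) ∈ K.faces := hv ▸ f.2.1
    have hcc : ((({v} : Finset ℕ).card : ℤ)) = 0 + 1 := by simp
    have hf : f = ⟨{v}, hm, hcc⟩ := Subtype.ext hv
    rw [hf, bdry_single_vtx K v hm hcc n, aug_single]

lemma aug_eq_zero_of_cycle {K : SComplex S} {z : Chains K (0+1)} (hz : z ∈ cycles K 0) :
    aug K z = 0 := by
  have h0 : bdry K (0+1) 0 z = 0 := hz
  rw [bdry_eq_aug] at h0
  exact (Finsupp.single_eq_zero).mp h0

open Classical in
/-- sum of coefficients over faces inside `B` -/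
noncomputable def phi (K : SComplex S) (B : Finset ℕ) : Chains K (0+1) →+ ℤ :=
  Finsupp.liftAddHom fun f => if f.1 ⊆ B then AddMonoidHom.id ℤ else 0

open Classical in
lemma phi_single (K : SComplex S) (B : Finset ℕ) (f : Face K (0+1)) (n : ℤ) :
    phi K B (Finsupp.single f n) = if f.1 ⊆ B then n else 0 := by
  rw [phi, Finsupp.liftAddHom_apply_single]
  split_ifs with h <;> simp [h]

open Classical in
lemma bdry_single_edge (K : SComplex S) (a b : ℕ) (hab : a < b)
    (h : ({a, b} : Finset ℕ) ∈ K.faces) (h2 : ((({a, b} : Finset ℕ).card : ℤ) = 0 + 2)) :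
    bdry K (0+2) (0+1) (Finsupp.single (⟨{a, b}, h, h2⟩ : Face K (0+2)) 1) =
      Finsupp.single (⟨{b}, K.down_closed h (by simp), by simp⟩ : Face K (0+1)) 1 -
      Finsupp.single (⟨{a}, K.down_closed h (by simp), by simp⟩ : Face K (0+1)) 1 := by
  have hne : a ≠ b := hab.ne
  rw [bdry, Finsupp.liftAddHom_apply_single, zmultiplesHom_apply, one_zsmul]
  rw [show ((⟨{a, b}, h, h2⟩ : Face K (0+2)) : Finset ℕ) = {a, b} from rfl]
  have hnm : a ∉ ({b} : Finset ℕ) := by simp [hne]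
  rw [Finset.sum_insert hnm, Finset.sum_singleton]
  have hea : (insert a ({b} : Finset ℕ)).erase a = {b} := Finset.erase_insert hnm
  have heb : (insert a ({b} : Finset ℕ)).erase b = {a} := by
    rw [Finset.pair_comm a b]
    exact Finset.erase_insert (by simp only [Finset.mem_singleton]; exact fun hba => hne hba.symm)
  have hfa : Finset.filter (fun y => y < a) (insert a {b}) = ∅ := by
    ext z
    simp only [Finset.mem_filter, Finset.mem_insert, Finset.mem_singleton,
      Finset.notMem_empty, iff_false]
    rintro ⟨rfl | rfl, hlt⟩ <;> omega
  have hfb : Finset.filter (fun y => y < b) (insert a {b}) = {a} := by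
    ext z
    simp only [Finset.mem_filter, Finset.mem_insert, Finset.mem_singleton]
    constructor
    · rintro ⟨rfl | rfl, hlt⟩ <;> omega
    · rintro rfl; exact ⟨Or.inl rfl, hab⟩
  have hca : ((({a, b} : Finset ℕ).erase a).card : ℤ) = 0 + 1 := by rw [hea]; simp
  have hcb : ((({a, b} : Finset ℕ).erase b).card : ℤ) = 0 + 1 := by rw [heb]; simp
  have hma : ({a, b} : Finset ℕ).erase a ∈ K.faces := K.down_closed h (Finset.erase_subset _ _)
  have hmb : ({a, b} : Finset ℕ).erase b ∈ K.faces := K.down_closed h (Finset.erase_subset _ _)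
  rw [dif_pos ⟨hma, hca⟩, dif_pos ⟨hmb, hcb⟩, hfa, hfb]
  simp only [Finset.card_empty, pow_zero, one_zsmul, Finset.card_singleton, pow_one,
    neg_zsmul, one_zsmul]
  rw [sub_eq_add_neg]
  congr 1
  · congr 1
    exact Subtype.ext hea
  · congr 2
    exact Subtype.ext heb


lemma card2_cast {a b : ℕ} (hne : a ≠ b) : ((({a, b} : Finset ℕ).card : ℤ)) = 0 + 2 := by
  rw [Finset.card_insert_of_notMem (by simp [hne]), Finset.card_singleton]
  norm_num

lemma sub_mem_range_of_lt (K : SComplex S) (a b : ℕ) (hab : a < b)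
    (h : ({a, b} : Finset ℕ) ∈ K.faces) (fa fb : Face K (0+1))
    (hfa : fa.1 = {a}) (hfb : fb.1 = {b}) :
    Finsupp.single fb (1 : ℤ) - Finsupp.single fa 1 ∈ (bdry K (0+2) (0+1)).range := by
  have h2 := card2_cast hab.ne
  refine ⟨Finsupp.single (⟨{a, b}, h, h2⟩ : Face K (0+2)) 1, ?_⟩
  rw [bdry_single_edge K a b hab h h2]
  have h1 : fb = ⟨{b}, K.down_closed h (by simp), by simp⟩ := Subtype.ext hfb
  have h2' : fa = ⟨{a}, K.down_closed h (by simp), by simp⟩ := Subtype.ext hfa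
  rw [h1, h2']

lemma sub_mem_range (K : SComplex S) (a b : ℕ) (hne : a ≠ b)
    (h : ({a, b} : Finset ℕ) ∈ K.faces) (fa fb : Face K (0+1))
    (hfa : fa.1 = {a}) (hfb : fb.1 = {b}) :
    Finsupp.single fb (1 : ℤ) - Finsupp.single fa 1 ∈ (bdry K (0+2) (0+1)).range := by
  rcases Ne.lt_or_gt hne with h1 | h1
  · exact sub_mem_range_of_lt K a b h1 h fa fb hfa hfb
  · have h' : ({b, a} : Finset ℕ) ∈ K.faces := by rwa [Finset.pair_comm]
    have := sub_mem_range_of_lt K b a h1 h' fb fa hfb hfa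
    have hm := neg_mem this
    rwa [neg_sub] at hm

open Classical in
lemma phi_bdry (K : SComplex S) (B : Finset ℕ)
    (H : ∀ a b : ℕ, ({a, b} : Finset ℕ) ∈ K.faces → (a ∈ B ↔ b ∈ B))
    (c : Chains K (0+2)) : phi K B (bdry K (0+2) (0+1) c) = 0 := by
  have key : ∀ (a b : ℕ), a < b → ∀ (h : ({a, b} : Finset ℕ) ∈ K.faces)
      (h2 : ((({a, b} : Finset ℕ).card : ℤ)) = 0 + 2) (n : ℤ),
      phi K B (bdry K (0+2) (0+1)
        (Finsupp.single (⟨{a, b}, h, h2⟩ : Face K (0+2)) n)) = 0 := by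
    intro a b hab h h2 n
    have hs : Finsupp.single (⟨{a, b}, h, h2⟩ : Face K (0+2)) n =
        n • Finsupp.single (⟨{a, b}, h, h2⟩ : Face K (0+2)) (1 : ℤ) := by
      rw [Finsupp.smul_single, smul_eq_mul, mul_one]
    rw [hs, map_zsmul, map_zsmul, bdry_single_edge K a b hab h h2, map_sub,
      phi_single, phi_single]
    have hiff := H a b h
    simp only [Finset.singleton_subset_iff]
    by_cases hb : b ∈ B
    · rw [if_pos hb, if_pos (hiff.mpr hb), sub_self, smul_zero]
    · rw [if_neg hb, if_neg (fun ha => hb (hiff.mp ha)), sub_self, smul_zero]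
  induction c using Finsupp.induction_linear with
  | zero => simp
  | add f g hf hg => rw [map_add, map_add, hf, hg, add_zero]
  | single f n =>
    have hcard : f.1.card = 2 := by have := f.2.2; omega
    obtain ⟨a, b, hne, hab⟩ := Finset.card_eq_two.mp hcard
    rcases hne.lt_or_gt with h1 | h1
    · have hf : f = ⟨{a, b}, hab ▸ f.2.1, hab ▸ f.2.2⟩ := Subtype.ext hab
      rw [hf]
      exact key a b h1 (hab ▸ f.2.1) (hab ▸ f.2.2) n
    · have hab' : f.1 = {b, a} := by rw [hab, Finset.pair_comm]
      have hf : f = ⟨{b, a}, hab' ▸ f.2.1, hab' ▸ f.2.2⟩ := Subtype.ext hab'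
      rw [hf]
      exact key b a h1 (hab' ▸ f.2.1) (hab' ▸ f.2.2) n

open Classical in
lemma chain_decomp (K : SComplex S) (A B : Finset ℕ)
    (hdisj : ∀ v, v ∈ A → v ∈ B → False)
    (hvert : ∀ f : Face K (0+1), ∃ v, f.1 = {v} ∧ (v ∈ A ∨ v ∈ B))
    (hedgeA : ∀ a b, a ∈ A → b ∈ A → ({a, b} : Finset ℕ) ∈ K.faces)
    (hedgeB : ∀ a b, a ∈ B → b ∈ B → ({a, b} : Finset ℕ) ∈ K.faces)
    (x y : ℕ) (hxA : x ∈ A) (hyB : y ∈ B) (fx fy : Face K (0+1))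
    (hfx : fx.1 = {x}) (hfy : fy.1 = {y}) (z : Chains K (0+1)) :
    z - (phi K A z) • Finsupp.single fx (1 : ℤ) - (phi K B z) • Finsupp.single fy 1
      ∈ (bdry K (0+2) (0+1)).range := by
  induction z using Finsupp.induction_linear with
  | zero =>
    rw [map_zero, map_zero, zero_smul, zero_smul, sub_zero, sub_zero]
    exact zero_mem _
  | add f g hf hg =>
    have heq : f + g - (phi K A (f + g)) • Finsupp.single fx (1 : ℤ)
        - (phi K B (f + g)) • Finsupp.single fy 1 =
        (f - (phi K A f) • Finsupp.single fx (1 : ℤ)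
          - (phi K B f) • Finsupp.single fy 1) +
        (g - (phi K A g) • Finsupp.single fx (1 : ℤ)
          - (phi K B g) • Finsupp.single fy 1) := by
      rw [map_add, map_add, add_smul, add_smul]
      abel
    rw [heq]
    exact add_mem hf hg
  | single f n =>
    obtain ⟨v, hv, hcase⟩ := hvert f
    rcases hcase with hvA | hvB
    · have hA : f.1 ⊆ A := by rw [hv]; simpa using hvA
      have hB : ¬ f.1 ⊆ B := by
        rw [hv, Finset.singleton_subset_iff]
        exact fun hvB => hdisj v hvA hvB
      rw [phi_single, phi_single, if_pos hA, if_neg hB, zero_smul, sub_zero]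
      by_cases hvx : v = x
      · have hffx : f = fx := Subtype.ext (by rw [hv, hfx, hvx])
        rw [hffx]
        have : Finsupp.single fx n - n • Finsupp.single fx (1 : ℤ) = 0 := by
          rw [Finsupp.smul_single, smul_eq_mul, mul_one, sub_self]
        rw [this]
        exact zero_mem _
      · have heq : Finsupp.single f n - n • Finsupp.single fx (1 : ℤ) =
            n • (Finsupp.single f (1 : ℤ) - Finsupp.single fx 1) := by
          rw [smul_sub, Finsupp.smul_single, Finsupp.smul_single, smul_eq_mul, mul_one]
        rw [heq]
        exact zsmul_mem (sub_mem_range K x v (fun h => hvx h.symm)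
          (hedgeA x v hxA hvA) fx f hfx hv) n
    · have hB : f.1 ⊆ B := by rw [hv]; simpa using hvB
      have hA : ¬ f.1 ⊆ A := by
        rw [hv, Finset.singleton_subset_iff]
        exact fun hvA => hdisj v hvA hvB
      rw [phi_single, phi_single, if_pos hB, if_neg hA, zero_smul, sub_zero]
      by_cases hvy : v = y
      · have hffy : f = fy := Subtype.ext (by rw [hv, hfy, hvy])
        rw [hffy]
        have : Finsupp.single fy n - n • Finsupp.single fy (1 : ℤ) = 0 := by
          rw [Finsupp.smul_single, smul_eq_mul, mul_one, sub_self]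
        rw [this]
        exact zero_mem _
      · have heq : Finsupp.single f n - n • Finsupp.single fy (1 : ℤ) =
            n • (Finsupp.single f (1 : ℤ) - Finsupp.single fy 1) := by
          rw [smul_sub, Finsupp.smul_single, Finsupp.smul_single, smul_eq_mul, mul_one]
        rw [heq]
        exact zsmul_mem (sub_mem_range K y v (fun h => hvy h.symm)
          (hedgeB y v hyB hvB) fy f hfy hv) n

open Classical in
lemma aug_eq_phi_add_phi (K : SComplex S) (A B : Finset ℕ)
    (hvert : ∀ f : Face K (0+1), ∃ v, f.1 = {v} ∧ (v ∈ A ∨ v ∈ B))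
    (hdisj : ∀ v, v ∈ A → v ∈ B → False) (z : Chains K (0+1)) :
    aug K z = phi K A z + phi K B z := by
  induction z using Finsupp.induction_linear with
  | zero => simp
  | add f g hf hg => rw [map_add, map_add, map_add, hf, hg]; abel
  | single f n =>
    obtain ⟨v, hv, hcase⟩ := hvert f
    rw [aug_single, phi_single, phi_single, hv]
    simp only [Finset.singleton_subset_iff]
    rcases hcase with hvA | hvB
    · rw [if_pos hvA, if_neg (fun hvB => hdisj v hvA hvB), add_zero]
    · rw [if_pos hvB, if_neg (fun hvA => hdisj v hvA hvB), zero_add]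


lemma wedge_restrict_faces (ρ τ J : Finset ℕ) (s : Finset ℕ) :
    s ∈ ((simplexWedge ρ τ).restrict J).faces ↔ s ⊆ J ∩ ρ ∨ s ⊆ J ∩ τ := by
  constructor
  · rintro ⟨σ', hσ', rfl⟩
    rcases hσ' with h | h
    · exact Or.inl (fun z hz => Finset.mem_inter.mpr
        ⟨(Finset.mem_inter.mp hz).2, h (Finset.mem_inter.mp hz).1⟩)
    · exact Or.inr (fun z hz => Finset.mem_inter.mpr
        ⟨(Finset.mem_inter.mp hz).2, h (Finset.mem_inter.mp hz).1⟩)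
  · have hself : ∀ (R : Finset ℕ), s ⊆ J ∩ R → s = s ∩ J :=
      fun R h => (Finset.inter_eq_left.mpr (h.trans Finset.inter_subset_left)).symm
    rintro (h | h)
    · exact ⟨s, Or.inl (fun z hz => (Finset.mem_inter.mp (h hz)).2), hself ρ h⟩
    · exact ⟨s, Or.inr (fun z hz => (Finset.mem_inter.mp (h hz)).2), hself τ h⟩

/-- Let `σ = ρ ∩ τ` and `L = ⟨ρ⟩ ⊔_σ ⟨τ⟩`. If `J ⊆ ρ ∪ τ` meets
both `ρ` and `τ` but not `σ`, then `L_J` has exactly two path components (namely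
`⟨ρ⟩_J` and `⟨τ⟩_J`), and `H̃_0(L_J)` is infinite cyclic generated by `[y] - [x]`
for any vertices `x ∈ J ∩ ρ`, `y ∈ J ∩ τ`. -/
theorem simplexWedge_two_components (ρ τ J : Finset ℕ) (hJ : J ⊆ ρ ∪ τ)
    (hJσ : J ∩ (ρ ∩ τ) = ∅) (x y : ℕ) (hx : x ∈ J ∩ ρ) (hy : y ∈ J ∩ τ) :
    numComponents ((simplexWedge ρ τ).restrict J) = 2 ∧
    (∀ a b : ℕ, a ∈ J ∩ ρ → b ∈ J ∩ ρ → Reach ((simplexWedge ρ τ).restrict J) a b) ∧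
    (∀ a b : ℕ, a ∈ J ∩ τ → b ∈ J ∩ τ → Reach ((simplexWedge ρ τ).restrict J) a b) ∧
    ¬ Reach ((simplexWedge ρ τ).restrict J) x y ∧
    (∀ (hy1 : ({y} : Finset ℕ) ∈ ((simplexWedge ρ τ).restrict J).faces ∧
          ((({y} : Finset ℕ).card : ℤ) = 0 + 1))
       (hx1 : ({x} : Finset ℕ) ∈ ((simplexWedge ρ τ).restrict J).faces ∧
          ((({x} : Finset ℕ).card : ℤ) = 0 + 1))
       (hc : Finsupp.single (⟨{y}, hy1⟩ : Face ((simplexWedge ρ τ).restrict J) (0 + 1)) (1 : ℤ)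
              - Finsupp.single (⟨{x}, hx1⟩ : Face ((simplexWedge ρ τ).restrict J) (0 + 1)) (1 : ℤ)
            ∈ cycles ((simplexWedge ρ τ).restrict J) 0),
      Function.Bijective
        ⇑(zmultiplesHom (RH ((simplexWedge ρ τ).restrict J) 0)
            (QuotientAddGroup.mk (⟨_, hc⟩ : cycles ((simplexWedge ρ τ).restrict J) 0)))) := by
  classical
  set K := (simplexWedge ρ τ).restrict J with hK
  have hfaces : ∀ s : Finset ℕ, s ∈ K.faces ↔ s ⊆ J ∩ ρ ∨ s ⊆ J ∩ τ :=
    wedge_restrict_faces ρ τ J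
  have hdisj : ∀ v, v ∈ J ∩ ρ → v ∈ J ∩ τ → False := by
    intro v h1 h2
    have : v ∈ J ∩ (ρ ∩ τ) := Finset.mem_inter.mpr
      ⟨(Finset.mem_inter.mp h1).1,
        Finset.mem_inter.mpr ⟨(Finset.mem_inter.mp h1).2, (Finset.mem_inter.mp h2).2⟩⟩
    rw [hJσ] at this
    exact absurd this (Finset.notMem_empty v)
  have hvertmem : ∀ v : ℕ, ({v} : Finset ℕ) ∈ K.faces ↔ v ∈ J ∩ ρ ∨ v ∈ J ∩ τ := by
    intro v
    rw [hfaces]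
    simp [Finset.singleton_subset_iff]
  have hedgeA : ∀ a b, a ∈ J ∩ ρ → b ∈ J ∩ ρ → ({a, b} : Finset ℕ) ∈ K.faces :=
    fun a b ha hb => (hfaces _).mpr (Or.inl
      (Finset.insert_subset_iff.mpr ⟨ha, Finset.singleton_subset_iff.mpr hb⟩))
  have hedgeB : ∀ a b, a ∈ J ∩ τ → b ∈ J ∩ τ → ({a, b} : Finset ℕ) ∈ K.faces :=
    fun a b ha hb => (hfaces _).mpr (Or.inr
      (Finset.insert_subset_iff.mpr ⟨ha, Finset.singleton_subset_iff.mpr hb⟩))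
  have hreachA : ∀ a b, a ∈ J ∩ ρ → b ∈ J ∩ ρ → Reach K a b :=
    fun a b ha hb => Relation.ReflTransGen.single (hedgeA a b ha hb)
  have hreachB : ∀ a b, a ∈ J ∩ τ → b ∈ J ∩ τ → Reach K a b :=
    fun a b ha hb => Relation.ReflTransGen.single (hedgeB a b ha hb)
  have hinvA : ∀ a b, Reach K a b → a ∈ J ∩ ρ → b ∈ J ∩ ρ := by
    intro a b h
    induction h with
    | refl => exact id
    | @tail m c _ he ih =>
      intro ha
      have hm := ih ha
      rcases (hfaces _).mp he with h' | h'
      · exact h' (by simp)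
      · exact absurd (h' (by simp)) (fun hmB => hdisj m hm hmB)
  have hinvB : ∀ a b, Reach K a b → a ∈ J ∩ τ → b ∈ J ∩ τ := by
    intro a b h
    induction h with
    | refl => exact id
    | @tail m c _ he ih =>
      intro ha
      have hm := ih ha
      rcases (hfaces _).mp he with h' | h'
      · exact absurd (h' (by simp)) (fun hmA => hdisj m hmA hm)
      · exact h' (by simp)
  have hxA : x ∈ J ∩ ρ := hx
  have hyB : y ∈ J ∩ τ := hy
  have hxnB : x ∉ J ∩ τ := fun h => hdisj x hxA h
  have hynA : y ∉ J ∩ ρ := fun h => hdisj y h hyB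
  refine ⟨?_, fun a b ha hb => hreachA a b ha hb, fun a b ha hb => hreachB a b ha hb,
    fun h => hdisj y (hinvA x y h hxA) hyB, ?_⟩
  · -- number of components
    have hresp : ∀ a b : {v : ℕ // ({v} : Finset ℕ) ∈ K.faces}, Reach K a.1 b.1 →
        decide (a.1 ∈ J ∩ τ) = decide (b.1 ∈ J ∩ τ) := by
      intro a b h
      by_cases hB : a.1 ∈ J ∩ τ
      · have hb := hinvB a.1 b.1 h hB
        simp [hB, hb]
      · have haA : a.1 ∈ J ∩ ρ := by
          rcases (hvertmem a.1).mp a.2 with h' | h'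
          · exact h'
          · exact absurd h' hB
        have hbA := hinvA a.1 b.1 h haA
        have hbB : b.1 ∉ J ∩ τ := fun hh => hdisj _ hbA hh
        simp [hB, hbB]
    let g : Quot (fun a b : {v : ℕ // ({v} : Finset ℕ) ∈ K.faces} => Reach K a.1 b.1) → Bool :=
      Quot.lift (fun v => decide (v.1 ∈ J ∩ τ)) hresp
    have hbij : Function.Bijective g := by
      constructor
      · intro q1 q2 hq
        obtain ⟨a, rfl⟩ := Quot.exists_rep q1
        obtain ⟨b, rfl⟩ := Quot.exists_rep q2
        have hab : decide (a.1 ∈ J ∩ τ) = decide (b.1 ∈ J ∩ τ) := hq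
        apply Quot.sound
        by_cases hB : a.1 ∈ J ∩ τ
        · have hbB : b.1 ∈ J ∩ τ := by
            by_contra hc
            simp [hB, hc] at hab
          exact hreachB a.1 b.1 hB hbB
        · have hbB : b.1 ∉ J ∩ τ := by
            by_contra hc
            simp [hB, hc] at hab
          have haA : a.1 ∈ J ∩ ρ := by
            rcases (hvertmem a.1).mp a.2 with h' | h'
            · exact h'
            · exact absurd h' hB
          have hbA : b.1 ∈ J ∩ ρ := by
            rcases (hvertmem b.1).mp b.2 with h' | h'
            · exact h'
            · exact absurd h' hbB
          exact hreachA a.1 b.1 haA hbA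
      · intro c
        cases c
        · exact ⟨Quot.mk _ ⟨x, (hvertmem x).mpr (Or.inl hxA)⟩, by simp [g, hxnB]⟩
        · exact ⟨Quot.mk _ ⟨y, (hvertmem y).mpr (Or.inr hyB)⟩, by simp [g, hyB]⟩
    have e := Equiv.ofBijective g hbij
    rw [numComponents, Nat.card_congr e, Nat.card_eq_fintype_card, Fintype.card_bool]
  · -- homology
    intro hy1 hx1 hc
    have hvert : ∀ f : Face K (0+1), ∃ v, f.1 = {v} ∧ (v ∈ J ∩ ρ ∨ v ∈ J ∩ τ) := by
      intro f
      obtain ⟨v, hv⟩ := face1_eq_singleton f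
      exact ⟨v, hv, (hvertmem v).mp (hv ▸ f.2.1)⟩
    have hH : ∀ a b : ℕ, ({a, b} : Finset ℕ) ∈ K.faces → (a ∈ J ∩ τ ↔ b ∈ J ∩ τ) := by
      intro a b h
      rcases (hfaces _).mp h with h' | h'
      · have ha : a ∈ J ∩ ρ := h' (by simp)
        have hb : b ∈ J ∩ ρ := h' (by simp)
        exact ⟨fun hh => absurd hh (fun hh => hdisj a ha hh),
          fun hh => absurd hh (fun hh => hdisj b hb hh)⟩
      · exact ⟨fun _ => h' (by simp), fun _ => h' (by simp)⟩
    set fy : Face K (0+1) := ⟨{y}, hy1⟩ with hfy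
    set fx : Face K (0+1) := ⟨{x}, hx1⟩ with hfx
    set w : Chains K (0+1) := Finsupp.single fy 1 - Finsupp.single fx 1 with hw
    have hphiw : phi K (J ∩ τ) w = 1 := by
      rw [hw, map_sub, phi_single, phi_single]
      rw [if_pos (by simpa [hfy] using hyB), if_neg (by simpa [hfx] using hxnB)]
      norm_num
    constructor
    · rw [injective_iff_map_eq_zero]
      intro n hn
      rw [zmultiplesHom_apply] at hn
      have hmk : (QuotientAddGroup.mk (n • (⟨w, hc⟩ : cycles K 0)) :
          RH K 0) = 0 := by
        calc (QuotientAddGroup.mk (n • (⟨w, hc⟩ : cycles K 0)) : RH K 0)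
            = n • QuotientAddGroup.mk (⟨w, hc⟩ : cycles K 0) :=
              map_zsmul (QuotientAddGroup.mk' (boundariesIn K 0)) n _
          _ = 0 := hn
      have hmem := (QuotientAddGroup.eq_zero_iff _).mp hmk
      rw [AddSubgroup.mem_comap] at hmem
      obtain ⟨c, hcc⟩ := hmem
      have h1 : phi K (J ∩ τ) (bdry K (0+2) (0+1) c) = 0 := phi_bdry K (J ∩ τ) hH c
      rw [hcc] at h1
      have h2 : ((cycles K 0).subtype (n • (⟨w, hc⟩ : cycles K 0))) = n • w := rfl
      rw [h2, map_zsmul, hphiw, smul_eq_mul, mul_one] at h1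
      exact h1
    · intro q
      induction q using QuotientAddGroup.induction_on with
      | H z =>
        refine ⟨phi K (J ∩ τ) z.1, ?_⟩
        rw [zmultiplesHom_apply]
        set n := phi K (J ∩ τ) z.1 with hn
        have hA : phi K (J ∩ ρ) z.1 = -n := by
          have h1 := aug_eq_phi_add_phi K (J ∩ ρ) (J ∩ τ) hvert hdisj z.1
          have h2 := aug_eq_zero_of_cycle z.2
          rw [h2] at h1
          linarith
        have hd := chain_decomp K (J ∩ ρ) (J ∩ τ) hdisj hvert hedgeA hedgeB
          x y hxA hyB fx fy rfl rfl z.1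
        rw [hA] at hd
        have hmem : n • (⟨w, hc⟩ : cycles K 0) - z ∈ boundariesIn K 0 := by
          rw [AddSubgroup.mem_comap]
          have h2 : ((cycles K 0).subtype (n • (⟨w, hc⟩ : cycles K 0) - z)) =
              n • w - z.1 := rfl
          rw [h2]
          have heq : n • w - z.1 =
              -(z.1 - (-n) • Finsupp.single fx (1 : ℤ) - n • Finsupp.single fy 1) := by
            rw [hw, smul_sub]
            simp only [neg_smul]
            abel
          rw [heq]
          exact neg_mem hd
        calc n • (QuotientAddGroup.mk (⟨w, hc⟩ : cycles K 0) : RH K 0)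
            = QuotientAddGroup.mk (n • (⟨w, hc⟩ : cycles K 0)) :=
              (map_zsmul (QuotientAddGroup.mk' (boundariesIn K 0)) n _).symm
          _ = QuotientAddGroup.mk z := (QuotientAddGroup.eq_iff_sub_mem).mpr hmem

end DH
end

section
/- Let K = K¹ ⊔_σ K² be a face sum of simplicial complexes on a finite totally ordered vertex set, with ρ = V(K¹) and τ = V(K²). If J is a subset of the vertex set with J ∩ σ = ∅, J ∩ ρ ≠ ∅ and J ∩ τ ≠ ∅, then the number of path components of K_J equals n₁ + n₂, where nᵢ is the number of path components of Kⁱ_J; consequently H̃_0(K_J) is free abelian of rank n₁ + n₂ − 1. -/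
set_option maxHeartbeats 1000000
set_option synthInstance.maxHeartbeats 1000000

open scoped DirectSum

namespace DH

variable {S : Finset ℕ}

/-! ### Auxiliary development for Statement 11 -/

section Aux

open Classical

/-- The type of (non-ghost) vertices of `L`. -/
abbrev Vt (L : SComplex S) : Type := {x : ℕ // ({x} : Finset ℕ) ∈ L.faces}

/-- The set of path components of `L`. -/
abbrev Qc (L : SComplex S) : Type := Quot (fun a b : Vt L => Reach L a.1 b.1)

lemma numComponents_eq (L : SComplex S) : numComponents L = Nat.card (Qc L) := rfl

instance (L : SComplex S) : Finite (Vt L) := by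
  have hsub : {x : ℕ | ({x} : Finset ℕ) ∈ L.faces} ⊆ ↑S := fun x hx =>
    L.faces_subset hx (Finset.mem_singleton_self x)
  exact (S.finite_toSet.subset hsub).to_subtype

instance (L : SComplex S) : Finite (Qc L) :=
  Finite.of_surjective (Quot.mk _) (fun q => Quot.exists_rep q)

lemma Face1_card {L : SComplex S} (σ : Face L 1) : σ.1.card = 1 := by
  have := σ.2.2; exact_mod_cast this

/-- The unique vertex of a `1`-element face. -/
noncomputable def vxOf {L : SComplex S} (σ : Face L 1) : Vt L :=
  ⟨(Finset.card_eq_one.mp (Face1_card σ)).choose,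
   by rw [← (Finset.card_eq_one.mp (Face1_card σ)).choose_spec]; exact σ.2.1⟩

lemma vxOf_spec {L : SComplex S} (σ : Face L 1) : σ.1 = {(vxOf σ).1} :=
  (Finset.card_eq_one.mp (Face1_card σ)).choose_spec

/-- The `1`-element face on a vertex. -/
def faceOf {L : SComplex S} (x : Vt L) : Face L 1 := ⟨{x.1}, x.2, by simp⟩

lemma faceOf_vxOf {L : SComplex S} (σ : Face L 1) : faceOf (vxOf σ) = σ :=
  Subtype.ext (vxOf_spec σ).symm

lemma vxOf_faceOf {L : SComplex S} (x : Vt L) : vxOf (faceOf x) = x :=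
  Subtype.ext (Finset.singleton_injective (vxOf_spec (faceOf x))).symm

/-- The component of a `1`-element face. -/
noncomputable def qmk (L : SComplex S) : Face L 1 → Qc L := fun σ => Quot.mk _ (vxOf σ)

/-- Projection of `1`-chains onto components. -/
noncomputable def piHom (L : SComplex S) : Chains L 1 →+ (Qc L →₀ ℤ) :=
  Finsupp.mapDomain.addMonoidHom (qmk L)

/-- Total-sum (augmentation) homomorphism. -/
noncomputable def totalHom (α : Type) : (α →₀ ℤ) →+ ℤ := Finsupp.liftAddHom fun _ => AddMonoidHom.id ℤ

lemma totalHom_single {α : Type} (a : α) (n : ℤ) : totalHom α (Finsupp.single a n) = n := by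
  simp [totalHom]

lemma totalHom_mapDomain {α β : Type} (f : α → β) (z : α →₀ ℤ) :
    totalHom β (Finsupp.mapDomain f z) = totalHom α z := by
  induction z using Finsupp.induction_linear with
  | zero => simp
  | add a b ha hb => rw [Finsupp.mapDomain_add, map_add, map_add, ha, hb]
  | single a n => rw [Finsupp.mapDomain_single, totalHom_single, totalHom_single]

/-- The empty face. -/
def e0 (L : SComplex S) : Face L 0 := ⟨∅, L.empty_mem, by simp⟩

lemma bdry_single_vertex {L : SComplex S} (x : Vt L) (n : ℤ) :
    bdry L 1 0 (Finsupp.single (faceOf x) n) = Finsupp.single (e0 L) n := by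
  classical
  rw [bdry, Finsupp.liftAddHom_apply_single, zmultiplesHom_apply]
  show n • (∑ y ∈ ({x.1} : Finset ℕ), _) = _
  rw [Finset.sum_singleton]
  simp only [show (faceOf x).1 = {x.1} from rfl]
  have h1 : Finset.filter (fun y => y < x.1) ({x.1} : Finset ℕ) = ∅ := by
    simp [Finset.filter_singleton]
  have h2 : ({x.1} : Finset ℕ).erase x.1 = ∅ := Finset.erase_singleton _
  simp only [h1, h2, Finset.card_empty, pow_zero, one_smul]
  rw [dif_pos (show (∅ : Finset ℕ) ∈ L.faces ∧ (((0:ℕ) : ℤ)) = 0 from ⟨L.empty_mem, by simp⟩)]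
  rw [Finsupp.smul_single', mul_one]
  rfl

lemma bdry10_eq {L : SComplex S} (z : Chains L 1) :
    bdry L 1 0 z = Finsupp.single (e0 L) (totalHom _ z) := by
  induction z using Finsupp.induction_linear with
  | zero => simp
  | add a b ha hb => rw [map_add, ha, hb, map_add, Finsupp.single_add]
  | single a n =>
    rw [← faceOf_vxOf a, bdry_single_vertex, totalHom_single]

lemma mem_cycles_iff {L : SComplex S} (z : Chains L 1) :
    bdry L 1 0 z = 0 ↔ totalHom _ z = 0 := by
  rw [bdry10_eq]; exact Finsupp.single_eq_zero

lemma face2_pair {L : SComplex S} (σ : Face L 2) : ∃ a b : ℕ, a < b ∧ σ.1 = {a, b} := by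
  classical
  have hc : σ.1.card = 2 := by have := σ.2.2; exact_mod_cast this
  obtain ⟨a, b, hab, hs⟩ := Finset.card_eq_two.mp hc
  rcases lt_or_gt_of_ne hab with h | h
  · exact ⟨a, b, h, hs⟩
  · exact ⟨b, a, h, by rw [hs, Finset.pair_comm]⟩

lemma bdry_single_edge_s11 {L : SComplex S} {a b : ℕ} (hab : a < b)
    (h : ({a, b} : Finset ℕ) ∈ L.faces) (hc : ((({a, b} : Finset ℕ)).card : ℤ) = 2)
    (ha : ({a} : Finset ℕ) ∈ L.faces) (hb : ({b} : Finset ℕ) ∈ L.faces) (n : ℤ) :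
    bdry L 2 1 (Finsupp.single (⟨{a, b}, h, hc⟩ : Face L 2) n) =
      Finsupp.single (faceOf (⟨b, hb⟩ : Vt L)) n - Finsupp.single (faceOf (⟨a, ha⟩ : Vt L)) n := by
  classical
  have hne : a ≠ b := hab.ne
  have hbma : b ∉ ({a} : Finset ℕ) := by simp [hne.symm]
  rw [bdry, Finsupp.liftAddHom_apply_single, zmultiplesHom_apply]
  show n • (∑ y ∈ ({a, b} : Finset ℕ), _) = _
  rw [Finset.sum_pair hne]
  have hea : ({a, b} : Finset ℕ).erase a = {b} := by
    rw [show ({a, b} : Finset ℕ) = insert a {b} from rfl, Finset.erase_insert (by simp [hne])]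
  have heb : ({a, b} : Finset ℕ).erase b = {a} := by
    rw [show ({a, b} : Finset ℕ) = insert a {b} from rfl, Finset.erase_insert_of_ne hne,
      Finset.erase_singleton]
    simp
  have hfa : Finset.filter (fun y => y < a) ({a, b} : Finset ℕ) = ∅ := by
    rw [Finset.filter_insert, if_neg (lt_irrefl a), Finset.filter_singleton,
      if_neg (not_lt.mpr hab.le)]
  have hfb : Finset.filter (fun y => y < b) ({a, b} : Finset ℕ) = {a} := by
    rw [Finset.filter_insert, if_pos hab, Finset.filter_singleton, if_neg (lt_irrefl b)]
    simp
  simp only [show (⟨{a, b}, h, hc⟩ : Face L 2).1 = {a, b} from rfl, hea, heb, hfa, hfb,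
    Finset.card_empty, Finset.card_singleton, pow_zero, pow_one, one_smul, neg_smul, one_smul]
  rw [dif_pos (show ({b} : Finset ℕ) ∈ L.faces ∧ (((1:ℕ)) : ℤ) = 1 from ⟨hb, by simp⟩),
    dif_pos (show ({a} : Finset ℕ) ∈ L.faces ∧ (((1:ℕ)) : ℤ) = 1 from ⟨ha, by simp⟩)]
  rw [smul_add, smul_neg, Finsupp.smul_single', Finsupp.smul_single', mul_one]
  rw [sub_eq_add_neg]
  rfl

lemma edge_diff_mem {L : SComplex S} {a b : ℕ} (h : ({a, b} : Finset ℕ) ∈ L.faces)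
    (ha : ({a} : Finset ℕ) ∈ L.faces) (hb : ({b} : Finset ℕ) ∈ L.faces) :
    Finsupp.single (faceOf (⟨b, hb⟩ : Vt L)) (1 : ℤ) -
      Finsupp.single (faceOf (⟨a, ha⟩ : Vt L)) 1 ∈ (bdry L 2 1).range := by
  rcases lt_trichotomy a b with hlt | heq | hgt
  · have hc : ((({a, b} : Finset ℕ)).card : ℤ) = 2 := by
      rw [Finset.card_pair hlt.ne]; rfl
    exact ⟨Finsupp.single ⟨{a, b}, h, hc⟩ 1, bdry_single_edge_s11 hlt h hc ha hb 1⟩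
  · subst heq
    rw [show (⟨a, hb⟩ : Vt L) = ⟨a, ha⟩ from rfl, sub_self]
    exact zero_mem _
  · have h' : ({b, a} : Finset ℕ) ∈ L.faces := by rwa [Finset.pair_comm]
    have hc : ((({b, a} : Finset ℕ)).card : ℤ) = 2 := by
      rw [Finset.card_pair hgt.ne]; rfl
    refine ⟨-Finsupp.single ⟨{b, a}, h', hc⟩ 1, ?_⟩
    rw [map_neg, bdry_single_edge_s11 hgt h' hc hb ha 1, neg_sub]

lemma reach_equivalence (L : SComplex S) :
    Equivalence (fun a b : Vt L => Reach L a.1 b.1) := by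
  constructor
  · intro x; exact Relation.ReflTransGen.refl
  · intro x y hxy
    exact (@Relation.ReflTransGen.stdSymm _ (EdgeRel L)
      ⟨fun u v huv => by rwa [EdgeRel, Finset.pair_comm] at huv⟩).symm _ _ hxy
  · intro x y z hxy hyz; exact hxy.trans hyz

lemma quot_mk_eq_iff {L : SComplex S} (x y : Vt L) :
    (Quot.mk _ x : Qc L) = Quot.mk _ y ↔ Reach L x.1 y.1 := by
  rw [Quot.eq]
  exact (reach_equivalence L).eqvGen_iff

lemma reach_diff_mem {L : SComplex S} (x : Vt L) {b : ℕ} (h : Reach L x.1 b) :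
    ∃ hb : ({b} : Finset ℕ) ∈ L.faces,
      Finsupp.single (faceOf (⟨b, hb⟩ : Vt L)) (1 : ℤ) -
        Finsupp.single (faceOf x) 1 ∈ (bdry L 2 1).range := by
  induction h with
  | refl =>
    refine ⟨x.2, ?_⟩
    rw [show (⟨x.1, x.2⟩ : Vt L) = x from rfl, sub_self]
    exact zero_mem _
  | @tail b c hab hbc ih =>
    obtain ⟨hb, hmem⟩ := ih
    have hcc : ({c} : Finset ℕ) ∈ L.faces := L.down_closed hbc (by simp)
    refine ⟨hcc, ?_⟩
    have h2 := edge_diff_mem hbc hb hcc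
    have h3 := add_mem h2 hmem
    convert h3 using 1
    abel

lemma quot_diff_mem {L : SComplex S} (x y : Vt L)
    (h : (Quot.mk _ x : Qc L) = Quot.mk _ y) :
    Finsupp.single (faceOf y) (1 : ℤ) - Finsupp.single (faceOf x) 1 ∈ (bdry L 2 1).range := by
  obtain ⟨hb, hmem⟩ := reach_diff_mem x ((quot_mk_eq_iff x y).mp h)
  have : (⟨y.1, hb⟩ : Vt L) = y := Subtype.ext rfl
  rwa [this] at hmem

lemma ker_pi_sub_range {L : SComplex S} (z : Chains L 1) (hz : piHom L z = 0) :
    z ∈ (bdry L 2 1).range := by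
  classical
  have hmd : Finsupp.mapDomain (fun σ => faceOf (Quot.out (qmk L σ))) z = 0 := by
    have hcomp : (fun σ : Face L 1 => faceOf (Quot.out (qmk L σ)))
        = (fun q : Qc L => faceOf (Quot.out q)) ∘ qmk L := rfl
    rw [hcomp, Finsupp.mapDomain_comp]
    have h0 : Finsupp.mapDomain (qmk L) z = 0 := hz
    rw [h0, Finsupp.mapDomain_zero]
  have hdecomp : z = ∑ σ ∈ z.support, (z σ) •
      (Finsupp.single σ (1 : ℤ) - Finsupp.single (faceOf (Quot.out (qmk L σ))) 1) := by
    have h1 : ∑ σ ∈ z.support, (z σ) • Finsupp.single σ (1 : ℤ) = z := by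
      conv_rhs => rw [← Finsupp.sum_single z]
      rw [Finsupp.sum]
      exact Finset.sum_congr rfl fun σ _ => by rw [Finsupp.smul_single', mul_one]
    have h2 : ∑ σ ∈ z.support, (z σ) •
        Finsupp.single (faceOf (Quot.out (qmk L σ))) (1 : ℤ)
        = Finsupp.mapDomain (fun σ => faceOf (Quot.out (qmk L σ))) z := by
      rw [Finsupp.mapDomain, Finsupp.sum]
      exact Finset.sum_congr rfl fun σ _ => by rw [Finsupp.smul_single', mul_one]
    simp only [smul_sub]
    rw [Finset.sum_sub_distrib, h1, h2, hmd, sub_zero]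
  rw [hdecomp]
  refine sum_mem fun σ hσ => zsmul_mem ?_ _
  have h := quot_diff_mem (Quot.out (qmk L σ)) (vxOf σ) (by rw [Quot.out_eq]; rfl)
  rwa [faceOf_vxOf] at h

lemma pi_bdry {L : SComplex S} (c : Chains L 2) : piHom L (bdry L 2 1 c) = 0 := by
  induction c using Finsupp.induction_linear with
  | zero => simp
  | add a b ha hb => rw [map_add, map_add, ha, hb, add_zero]
  | single σ n =>
    obtain ⟨a, b, hab, hσ⟩ := face2_pair σ
    have hface : ({a, b} : Finset ℕ) ∈ L.faces := hσ ▸ σ.2.1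
    have ha : ({a} : Finset ℕ) ∈ L.faces := L.down_closed hface (by simp)
    have hb : ({b} : Finset ℕ) ∈ L.faces := L.down_closed hface (by simp)
    have hc : ((({a, b} : Finset ℕ)).card : ℤ) = 2 := by rw [Finset.card_pair hab.ne]; rfl
    have hσ' : σ = ⟨{a, b}, hface, hc⟩ := Subtype.ext hσ
    rw [hσ', bdry_single_edge_s11 hab hface hc ha hb n, map_sub]
    show Finsupp.mapDomain (qmk L) _ - Finsupp.mapDomain (qmk L) _ = 0
    rw [Finsupp.mapDomain_single, Finsupp.mapDomain_single]
    have hq : qmk L (faceOf (⟨b, hb⟩ : Vt L)) = qmk L (faceOf (⟨a, ha⟩ : Vt L)) := by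
      show Quot.mk _ (vxOf _) = Quot.mk _ (vxOf _)
      rw [vxOf_faceOf, vxOf_faceOf]
      exact Quot.sound (Relation.ReflTransGen.single
        (show EdgeRel L b a from by rw [EdgeRel, Finset.pair_comm]; exact hface))
    rw [hq, sub_self]


/-- The map from reduced `0`-cycles to sum-zero component chains. -/
noncomputable def Phi (L : SComplex S) : cycles L 0 →+ ((totalHom (Qc L)).ker) :=
  AddMonoidHom.codRestrict ((piHom L).comp (cycles L 0).subtype) _ (by
    rintro ⟨z, hz⟩
    rw [AddMonoidHom.mem_ker]
    show totalHom _ (Finsupp.mapDomain (qmk L) (z : Chains L 1)) = 0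
    rw [totalHom_mapDomain]
    exact (mem_cycles_iff (L := L) z).mp hz)

lemma Phi_surj (L : SComplex S) : Function.Surjective (Phi L) := by
  rintro ⟨g, hg⟩
  have hg' : totalHom _ g = 0 := hg
  set z : Chains L 1 := Finsupp.mapDomain (fun q : Qc L => faceOf (Quot.out q)) g with hzdef
  have hz : bdry L 1 0 z = 0 :=
    (mem_cycles_iff z).mpr (by rw [hzdef, totalHom_mapDomain]; exact hg')
  refine ⟨⟨z, hz⟩, ?_⟩
  apply Subtype.ext
  show Finsupp.mapDomain (qmk L) z = g
  rw [hzdef, ← Finsupp.mapDomain_comp]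
  have hcid : (qmk L) ∘ (fun q : Qc L => faceOf (Quot.out q)) = id := by
    funext q
    show Quot.mk _ (vxOf (faceOf (Quot.out q))) = q
    rw [vxOf_faceOf]
    exact Quot.out_eq q
  rw [hcid, Finsupp.mapDomain_id]

lemma Phi_ker (L : SComplex S) : (Phi L).ker = boundariesIn L 0 := by
  ext z
  rw [AddMonoidHom.mem_ker, AddSubgroup.mem_comap]
  constructor
  · intro h
    have hpi : Finsupp.mapDomain (qmk L) z.1 = 0 := congrArg Subtype.val h
    exact ker_pi_sub_range z.1 hpi
  · rintro ⟨c, hc⟩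
    apply Subtype.ext
    show Finsupp.mapDomain (qmk L) z.1 = 0
    rw [show z.1 = bdry L 2 1 c from hc.symm]
    exact pi_bdry c

/-- `H̃₀(L)` is the group of sum-zero component chains. -/
noncomputable def RH0equiv (L : SComplex S) : RH L 0 ≃+ ((totalHom (Qc L)).ker) :=
  (QuotientAddGroup.quotientAddEquivOfEq (Phi_ker L).symm).trans
    (QuotientAddGroup.quotientKerEquivOfSurjective (Phi L) (Phi_surj L))

lemma totalHom_eq_sum {α : Type} [Fintype α] (g : α →₀ ℤ) : totalHom α g = ∑ a, g a := by
  rw [totalHom, Finsupp.liftAddHom_apply]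
  exact Finsupp.sum_fintype _ _ (fun _ => rfl)

lemma kernel_total_equiv (Q : Type) [Finite Q] [Nonempty Q] :
    Nonempty ((totalHom Q).ker ≃+ (Fin (Nat.card Q - 1) → ℤ)) := by
  classical
  have : Fintype Q := Fintype.ofFinite Q
  obtain ⟨m, hm⟩ := Nat.exists_eq_succ_of_ne_zero (Nat.card_ne_zero.mpr ⟨‹Nonempty Q›, ‹Finite Q›⟩)
  have e : Q ≃ Fin (m + 1) := (Finite.equivFin Q).trans (finCongr hm)
  rw [hm]
  simp only [Nat.succ_sub_one]
  refine ⟨?_⟩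
  refine
    { toFun := fun z i => (z : Q →₀ ℤ) (e.symm i.succ)
      invFun := fun f =>
        ⟨Finsupp.equivFunOnFinite.symm (fun q => (Fin.cons (-∑ i, f i) f : Fin (m+1) → ℤ) (e q)), ?_⟩
      left_inv := ?_
      right_inv := ?_
      map_add' := ?_ }
  · rw [AddMonoidHom.mem_ker, totalHom_eq_sum]
    have h1 : ∀ q, (Finsupp.equivFunOnFinite.symm
        (fun q => (Fin.cons (-∑ i, f i) f : Fin (m+1) → ℤ) (e q))) q = (Fin.cons (-∑ i, f i) f : Fin (m+1) → ℤ) (e q) :=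
      fun q => Finsupp.equivFunOnFinite_symm_apply_apply _ _
    rw [Finset.sum_congr rfl (fun q _ => h1 q)]
    rw [Equiv.sum_comp e (fun j => Fin.cons (-∑ i, f i) f j), Fin.sum_cons]
    simp
  · rintro ⟨z, hz⟩
    apply Subtype.ext
    apply Finsupp.ext
    intro q
    simp only
    rw [Finsupp.equivFunOnFinite_symm_apply_apply]
    have hq : q = e.symm (e q) := (e.symm_apply_apply q).symm
    conv_rhs => rw [hq]
    generalize (e q) = j
    have hz' : totalHom _ z = 0 := hz
    rw [totalHom_eq_sum] at hz'
    have hsum : ∑ j : Fin (m + 1), z (e.symm j) = 0 := by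
      rw [Equiv.sum_comp e.symm (fun q => z q)]; exact hz'
    rw [Fin.sum_univ_succ] at hsum
    induction j using Fin.cases with
    | zero => rw [Fin.cons_zero]; linarith [hsum]
    | succ i => rw [Fin.cons_succ]
  · intro f
    funext i
    simp only
    rw [Finsupp.equivFunOnFinite_symm_apply_apply, Equiv.apply_symm_apply, Fin.cons_succ]
  · intro x y
    funext i
    simp [Finsupp.add_apply]

lemma RH0_iso (L : SComplex S) (hne : ∃ x : ℕ, ({x} : Finset ℕ) ∈ L.faces) :
    Nonempty (RH L 0 ≃+ (Fin (numComponents L - 1) → ℤ)) := by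
  have h1 : Nonempty (Vt L) := ⟨⟨hne.choose, hne.choose_spec⟩⟩
  have h2 : Nonempty (Qc L) := Nonempty.map (Quot.mk _) h1
  obtain ⟨e⟩ := kernel_total_equiv (Qc L)
  rw [numComponents_eq]
  exact ⟨(RH0equiv L).trans e⟩

lemma restrict_union_faces {K K1 K2 : SComplex S} {σ : Finset ℕ}
    (hK : IsFaceSum K K1 K2 σ) (J : Finset ℕ) :
    (K.restrict J).faces = (K1.restrict J).faces ∪ (K2.restrict J).faces := by
  ext τ
  constructor
  · rintro ⟨ρ, hρ, rfl⟩
    rw [hK.union] at hρ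
    rcases hρ with h | h
    · exact Or.inl ⟨ρ, h, rfl⟩
    · exact Or.inr ⟨ρ, h, rfl⟩
  · rintro (⟨ρ, h, rfl⟩ | ⟨ρ, h, rfl⟩)
    · exact ⟨ρ, hK.le1 h, rfl⟩
    · exact ⟨ρ, hK.le2 h, rfl⟩

lemma restrict_disjoint {K K1 K2 : SComplex S} {σ : Finset ℕ} {J : Finset ℕ}
    (hK : IsFaceSum K K1 K2 σ) (hJσ : J ∩ σ = ∅) {τ : Finset ℕ}
    (h1 : τ ∈ (K1.restrict J).faces) (h2 : τ ∈ (K2.restrict J).faces) : τ = ∅ := by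
  obtain ⟨ρ1, hρ1, rfl⟩ := h1
  have hτ1 : ρ1 ∩ J ∈ K1.faces := K1.down_closed hρ1 Finset.inter_subset_left
  obtain ⟨ρ2, hρ2, hEq⟩ := h2
  have hτ2 : ρ1 ∩ J ∈ K2.faces := by
    rw [hEq]; exact K2.down_closed hρ2 Finset.inter_subset_left
  have hσ' : ρ1 ∩ J ⊆ σ := by
    have hmem : ρ1 ∩ J ∈ K1.faces ∩ K2.faces := ⟨hτ1, hτ2⟩
    rw [hK.inter] at hmem
    exact hmem
  apply Finset.eq_empty_of_forall_notMem
  intro x hx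
  have hxJ : x ∈ J := Finset.inter_subset_right hx
  have hxσ : x ∈ σ := hσ' hx
  have : x ∈ J ∩ σ := Finset.mem_inter.mpr ⟨hxJ, hxσ⟩
  rw [hJσ] at this
  exact absurd this (Finset.notMem_empty x)

lemma comp_count {K K1 K2 : SComplex S} {σ : Finset ℕ} {J : Finset ℕ}
    (hK : IsFaceSum K K1 K2 σ) (hJσ : J ∩ σ = ∅) :
    numComponents (K.restrict J) =
      numComponents (K1.restrict J) + numComponents (K2.restrict J) := by
  classical
  set L := K.restrict J with hL
  set L1 := K1.restrict J with hL1
  set L2 := K2.restrict J with hL2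
  have hsub1 : L1.faces ⊆ L.faces := restrict_mono hK.le1 J
  have hsub2 : L2.faces ⊆ L.faces := restrict_mono hK.le2 J
  have hun : L.faces = L1.faces ∪ L2.faces := restrict_union_faces hK J
  have hdis : ∀ {τ : Finset ℕ}, τ ∈ L1.faces → τ ∈ L2.faces → τ = ∅ :=
    fun h1 h2 => restrict_disjoint hK hJσ h1 h2
  have hv2 : ∀ x : ℕ, ({x} : Finset ℕ) ∈ L.faces → ({x} : Finset ℕ) ∉ L1.faces →
      ({x} : Finset ℕ) ∈ L2.faces := by
    intro x hx hx1
    have := hx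
    rw [hun] at this
    exact this.resolve_left hx1
  have hnot12 : ∀ x : ℕ, ({x} : Finset ℕ) ∈ L1.faces → ({x} : Finset ℕ) ∈ L2.faces → False := by
    intro x h1 h2
    exact absurd (hdis h1 h2) (Finset.singleton_ne_empty x)
  have hedge1 : ∀ a b : ℕ, ({a} : Finset ℕ) ∈ L1.faces → ({a, b} : Finset ℕ) ∈ L.faces →
      ({a, b} : Finset ℕ) ∈ L1.faces ∧ ({b} : Finset ℕ) ∈ L1.faces := by
    intro a b ha hab
    rw [hun] at hab
    rcases hab with h | h
    · exact ⟨h, L1.down_closed h (by simp)⟩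
    · exact absurd (hnot12 a ha (L2.down_closed h (by simp))) not_false
  have hedge2 : ∀ a b : ℕ, ({a} : Finset ℕ) ∈ L2.faces → ({a, b} : Finset ℕ) ∈ L.faces →
      ({a, b} : Finset ℕ) ∈ L2.faces ∧ ({b} : Finset ℕ) ∈ L2.faces := by
    intro a b ha hab
    rw [hun] at hab
    rcases hab with h | h
    · exact absurd (hnot12 a (L1.down_closed h (by simp)) ha) not_false
    · exact ⟨h, L2.down_closed h (by simp)⟩
  have hreach1 : ∀ a b : ℕ, ({a} : Finset ℕ) ∈ L1.faces → Reach L a b →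
      Reach L1 a b ∧ ({b} : Finset ℕ) ∈ L1.faces := by
    intro a b ha h
    induction h with
    | refl => exact ⟨Relation.ReflTransGen.refl, ha⟩
    | @tail b c hab hbc ih =>
      obtain ⟨h1, hb⟩ := ih
      obtain ⟨he, hcm⟩ := hedge1 b c hb hbc
      exact ⟨h1.tail he, hcm⟩
  have hreach2 : ∀ a b : ℕ, ({a} : Finset ℕ) ∈ L2.faces → Reach L a b →
      Reach L2 a b ∧ ({b} : Finset ℕ) ∈ L2.faces := by
    intro a b ha h
    induction h with
    | refl => exact ⟨Relation.ReflTransGen.refl, ha⟩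
    | @tail b c hab hbc ih =>
      obtain ⟨h1, hb⟩ := ih
      obtain ⟨he, hcm⟩ := hedge2 b c hb hbc
      exact ⟨h1.tail he, hcm⟩
  -- the two maps
  let G : Qc L1 ⊕ Qc L2 → Qc L :=
    Sum.elim
      (Quot.lift (fun x : Vt L1 => Quot.mk _ (⟨x.1, hsub1 x.2⟩ : Vt L))
        (fun a b h => Quot.sound (Relation.ReflTransGen.mono (r := EdgeRel L1) (p := EdgeRel L) (fun u v hu => hsub1 hu) _ _ h)))
      (Quot.lift (fun x : Vt L2 => Quot.mk _ (⟨x.1, hsub2 x.2⟩ : Vt L))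
        (fun a b h => Quot.sound (Relation.ReflTransGen.mono (r := EdgeRel L2) (p := EdgeRel L) (fun u v hu => hsub2 hu) _ _ h)))
  let H : Qc L → Qc L1 ⊕ Qc L2 :=
    Quot.lift (fun x : Vt L =>
      if h : ({x.1} : Finset ℕ) ∈ L1.faces then Sum.inl (Quot.mk _ (⟨x.1, h⟩ : Vt L1))
      else Sum.inr (Quot.mk _ (⟨x.1, hv2 x.1 x.2 h⟩ : Vt L2)))
      (by
        intro a b h
        by_cases ha : ({a.1} : Finset ℕ) ∈ L1.faces
        · obtain ⟨hr, hb⟩ := hreach1 a.1 b.1 ha h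
          simp only [dif_pos ha, dif_pos hb]
          exact congrArg Sum.inl (Quot.sound hr)
        · have ha2 : ({a.1} : Finset ℕ) ∈ L2.faces := hv2 a.1 a.2 ha
          obtain ⟨hr, hb⟩ := hreach2 a.1 b.1 ha2 h
          have hb1 : ({b.1} : Finset ℕ) ∉ L1.faces := fun hb1 => hnot12 b.1 hb1 hb
          simp only [dif_neg ha, dif_neg hb1]
          exact congrArg Sum.inr (Quot.sound hr))
  have hHG : ∀ p, H (G p) = p := by
    rintro (q | q)
    · induction q using Quot.ind with
      | _ x =>
        show H (Quot.mk _ (⟨x.1, hsub1 x.2⟩ : Vt L)) = _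
        show (if h : _ then _ else _) = _
        rw [dif_pos x.2]
    · induction q using Quot.ind with
      | _ x =>
        show H (Quot.mk _ (⟨x.1, hsub2 x.2⟩ : Vt L)) = _
        show (if h : _ then _ else _) = _
        rw [dif_neg (fun h1 => hnot12 x.1 h1 x.2)]
  have hGH : ∀ q, G (H q) = q := by
    intro q
    induction q using Quot.ind with
    | _ x =>
      show G (if h : _ then _ else _) = _
      by_cases h : ({x.1} : Finset ℕ) ∈ L1.faces
      · rw [dif_pos h]
        rfl
      · rw [dif_neg h]
        rfl
  have hcard : Nat.card (Qc L) = Nat.card (Qc L1 ⊕ Qc L2) :=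
    Nat.card_congr ⟨H, G, hGH, hHG⟩
  rw [numComponents_eq, numComponents_eq, numComponents_eq, hcard, Nat.card_sum]

end Aux


/-- For a face sum `K = K¹ ⊔_σ K²` with `ρ = V(K¹)`, `τ = V(K²)`,
if `J` misses `σ` but meets both `ρ` and `τ`, then the number of path components
of `K_J` equals `n₁ + n₂` where `nᵢ` is the number of path components of `Kⁱ_J`;
consequently `H̃_0(K_J)` is free abelian of rank `n₁ + n₂ - 1`. -/
theorem components_of_faceSum (S : Finset ℕ) (K K1 K2 : SComplex S) (σ : Finset ℕ)
    (hK : IsFaceSum K K1 K2 σ) (J : Finset ℕ) (hJ : J ⊆ S)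
    (hJσ : J ∩ σ = ∅) (hJρ : (J ∩ effVerts K1).Nonempty) (hJτ : (J ∩ effVerts K2).Nonempty) :
    numComponents (K.restrict J) =
      numComponents (K1.restrict J) + numComponents (K2.restrict J) ∧
    Nonempty (RH (K.restrict J) 0 ≃+
      (Fin (numComponents (K1.restrict J) + numComponents (K2.restrict J) - 1) → ℤ)) := by
  classical
  have hcount := comp_count hK hJσ
  refine ⟨hcount, ?_⟩
  have hvert : ∃ x : ℕ, ({x} : Finset ℕ) ∈ (K.restrict J).faces := by
    obtain ⟨x, hx⟩ := hJρ
    rw [Finset.mem_inter] at hx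
    obtain ⟨hxJ, hxV⟩ := hx
    have hx1 : ({x} : Finset ℕ) ∈ K1.faces := by
      rw [effVerts, Finset.mem_filter] at hxV
      exact hxV.2
    refine ⟨x, ⟨{x}, hK.le1 hx1, ?_⟩⟩
    rw [Finset.inter_eq_left.mpr (Finset.singleton_subset_iff.mpr hxJ)]
  obtain ⟨e⟩ := RH0_iso (K.restrict J) hvert
  rw [hcount] at e
  exact ⟨e⟩

end DH
end
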